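/- arXiv:funct-an/9712004 — 10 statements merged into one kernel-verified Lean document; each statement's English description precedes it below -/
import Mathlib

section
/- Let M : ℂ₊ → M_n(ℂ) be an n×n matrix-valued Herglotz function. Then the kernel of Im(M(z)) (as a subspace of ℂⁿ) is independent of z ∈ ℂ₊; in particular, the rank of Im(M(z)) is the same for all z ∈ ℂ₊. -/
open Matrix
open scoped ComplexOrder

/-- The "imaginary part" `(M - M*)/(2i)` of a complex square matrix. -/
noncomputable def matIm {n : ℕ} (M : Matrix (Fin n) (Fin n) ℂ) : Matrix (Fin n) (Fin n) ℂ :=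
  (2 * Complex.I)⁻¹ • (M - Mᴴ)

lemma quadIm {n : ℕ} (A : Matrix (Fin n) (Fin n) ℂ) (x : Fin n → ℂ) :
    star x ⬝ᵥ matIm A *ᵥ x = (((star x ⬝ᵥ A *ᵥ x).im : ℝ) : ℂ) := by
  have hconj : star x ⬝ᵥ Aᴴ *ᵥ x = star (star x ⬝ᵥ A *ᵥ x) := by
    rw [star_dotProduct, star_mulVec, conjTranspose_conjTranspose, ← dotProduct_mulVec]
  have h2I : (2 * Complex.I) ≠ 0 := by
    simp [Complex.I_ne_zero]
  rw [matIm, smul_mulVec, dotProduct_smul, sub_mulVec, dotProduct_sub, hconj]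
  set c := star x ⬝ᵥ A *ᵥ x
  rw [show star c = (starRingEnd ℂ) c from rfl, Complex.sub_conj]
  field_simp
  rw [smul_eq_mul, div_mul_eq_mul_div, one_mul, div_eq_iff h2I]
  push_cast
  ring

/-- Main auxiliary step: if `Im (M z)` kills `x` for one `z` in the upper half-plane,
then it does for all of them. -/
lemma herglotz_kernel_mono {n : ℕ}
    (M : ℂ → Matrix (Fin n) (Fin n) ℂ)
    (hanal : ∀ i j : Fin n, DifferentiableOn ℂ (fun z => M z i j) {z : ℂ | 0 < z.im})
    (hpos : ∀ z : ℂ, 0 < z.im → (matIm (M z)).PosSemidef)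
    {z w : ℂ} (hz : 0 < z.im) (hw : 0 < w.im) (x : Fin n → ℂ)
    (hx : matIm (M z) *ᵥ x = 0) : matIm (M w) *ᵥ x = 0 := by
  set U : Set ℂ := {z : ℂ | 0 < z.im} with hUdef
  have hUopen : IsOpen U := isOpen_lt continuous_const Complex.continuous_im
  have hUconn : IsPreconnected U := (convex_halfSpace_im_gt 0).isPreconnected
  set F : ℂ → ℂ := fun ζ => star x ⬝ᵥ M ζ *ᵥ x with hFdef
  have hFdiff : DifferentiableOn ℂ F U := by
    have hFeq : F = fun ζ => ∑ i, ∑ j, (star x) i * (M ζ i j * x j) := by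
      funext ζ
      simp [hFdef, dotProduct, mulVec, Finset.mul_sum]
    rw [hFeq]
    apply DifferentiableOn.fun_sum
    intro i _
    apply DifferentiableOn.fun_sum
    intro j _
    exact (differentiableOn_const _).mul ((hanal i j).mul (differentiableOn_const _))
  have himnonneg : ∀ ζ ∈ U, 0 ≤ (F ζ).im := by
    intro ζ hζ
    have h0 := (hpos ζ hζ).dotProduct_mulVec_nonneg x
    rw [quadIm] at h0
    exact_mod_cast (Complex.zero_le_real).mp h0
  have himz : (F z).im = 0 := by
    have : star x ⬝ᵥ matIm (M z) *ᵥ x = 0 := by rw [hx, dotProduct_zero]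
    rw [quadIm] at this
    exact_mod_cast this
  set g : ℂ → ℂ := fun ζ => Complex.exp (Complex.I * F ζ) with hgdef
  have hnorm : ∀ ζ, ‖g ζ‖ = Real.exp (-(F ζ).im) := by
    intro ζ
    rw [hgdef]
    simp [Complex.norm_exp]
  have hgd : DifferentiableOn ℂ g U :=
    ((differentiableOn_const _).mul hFdiff).cexp
  have hmax : IsMaxOn (norm ∘ g) U z := by
    intro ζ hζ
    simp only [Function.comp_apply, Set.mem_setOf_eq]
    rw [hnorm, hnorm, himz, neg_zero]
    exact Real.exp_le_exp.mpr (by linarith [himnonneg ζ hζ])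
  have heq := Complex.eqOn_of_isPreconnected_of_isMaxOn_norm hUconn hUopen hgd hz hmax
  have hgw : g w = g z := heq hw
  have himw : (F w).im = 0 := by
    have h1 : Real.exp (-(F w).im) = Real.exp (-(F z).im) := by
      rw [← hnorm, ← hnorm, hgw]
    have := Real.exp_injective h1
    rw [himz] at this
    linarith
  have hq : star x ⬝ᵥ matIm (M w) *ᵥ x = 0 := by
    rw [quadIm, himw]
    simp
  exact ((hpos w hw).dotProduct_mulVec_zero_iff x).mp hq

/-- For a matrix-valued Herglotz function `M`, the kernel of `Im (M z)` is independent of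
`z` in the open upper half-plane; in particular the rank of `Im (M z)` is constant there. -/
theorem kernel_im_herglotz_matrix_independent {n : ℕ}
    (M : ℂ → Matrix (Fin n) (Fin n) ℂ)
    (hanal : ∀ i j : Fin n, DifferentiableOn ℂ (fun z => M z i j) {z : ℂ | 0 < z.im})
    (hpos : ∀ z : ℂ, 0 < z.im → (matIm (M z)).PosSemidef) :
    ∀ z w : ℂ, 0 < z.im → 0 < w.im →
      (∀ x : Fin n → ℂ, matIm (M z) *ᵥ x = 0 ↔ matIm (M w) *ᵥ x = 0) ∧
        (matIm (M z)).rank = (matIm (M w)).rank := by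
  intro z w hz hw
  have hker : ∀ x : Fin n → ℂ, matIm (M z) *ᵥ x = 0 ↔ matIm (M w) *ᵥ x = 0 := fun x =>
    ⟨herglotz_kernel_mono M hanal hpos hz hw x,
     herglotz_kernel_mono M hanal hpos hw hz x⟩
  refine ⟨hker, ?_⟩
  have hkereq : LinearMap.ker (matIm (M z)).mulVecLin = LinearMap.ker (matIm (M w)).mulVecLin := by
    ext x
    simpa [LinearMap.mem_ker, Matrix.mulVecLin_apply] using hker x
  have h1 := LinearMap.finrank_range_add_finrank_ker (matIm (M z)).mulVecLin
  have h2 := LinearMap.finrank_range_add_finrank_ker (matIm (M w)).mulVecLin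
  rw [hkereq] at h1
  rw [Matrix.rank, Matrix.rank]
  omega
end

section
/- Let A = (A_{p,q})_{1≤p,q≤2} ∈ 𝒜_{2n} and let M ∈ M_n(ℂ) satisfy Im(M) positive semidefinite. Then every x ∈ ℂⁿ with (A_{1,1} + A_{1,2}M)x = 0 satisfies Im(M)x = 0, i.e., ker(A_{1,1} + A_{1,2}M) ⊆ ker(Im(M)). In particular, if Im(M) is positive definite, then the matrix A_{1,1} + A_{1,2}M is invertible. -/
open Matrix
open scoped ComplexOrder

/-- The matrix `J_{2n} = ((0, -I_n), (I_n, 0))`. -/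
def J2n (n : ℕ) : Matrix (Fin n ⊕ Fin n) (Fin n ⊕ Fin n) ℂ :=
  Matrix.fromBlocks 0 (-1) 1 0

lemma star_sum_elim {n : ℕ} (a b : Fin n → ℂ) :
    star (Sum.elim a b) = Sum.elim (star a) (star b) := by
  funext i; cases i <;> rfl

/-- If `A = (A_{p,q}) ∈ 𝒜_{2n}` and `Im M ≥ 0`, then
`ker (A₁₁ + A₁₂ M) ⊆ ker (Im M)`; in particular if `Im M > 0` then
`A₁₁ + A₁₂ M` is invertible. -/
theorem kernel_subset_kernel_im {n : ℕ}
    (A11 A12 A21 A22 M : Matrix (Fin n) (Fin n) ℂ)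
    (hA : (Matrix.fromBlocks A11 A12 A21 A22)ᴴ * J2n n * Matrix.fromBlocks A11 A12 A21 A22
      = J2n n)
    (hM : (matIm M).PosSemidef) :
    (∀ x : Fin n → ℂ, (A11 + A12 * M) *ᵥ x = 0 → matIm M *ᵥ x = 0) ∧
      ((matIm M).PosDef → IsUnit (A11 + A12 * M)) := by
  have key : ∀ x : Fin n → ℂ, (A11 + A12 * M) *ᵥ x = 0 → matIm M *ᵥ x = 0 := by
    intro x hx
    set A := Matrix.fromBlocks A11 A12 A21 A22 with hAdef
    set u : Fin n ⊕ Fin n → ℂ := Sum.elim x (M *ᵥ x) with hu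
    have e1 : A11 *ᵥ x + A12 *ᵥ (M *ᵥ x) = (A11 + A12 * M) *ᵥ x := by
      simp [Matrix.add_mulVec, Matrix.mulVec_mulVec]
    have e2 : A21 *ᵥ x + A22 *ᵥ (M *ᵥ x) = (A21 + A22 * M) *ᵥ x := by
      simp [Matrix.add_mulVec, Matrix.mulVec_mulVec]
    have hAu : A *ᵥ u = Sum.elim (0 : Fin n → ℂ) ((A21 + A22 * M) *ᵥ x) := by
      rw [hAdef, hu, Matrix.fromBlocks_mulVec]
      simp only [Sum.elim_comp_inl, Sum.elim_comp_inr]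
      rw [e1, e2, hx]
    have h1 : star u ⬝ᵥ (J2n n *ᵥ u) = star (A *ᵥ u) ⬝ᵥ (J2n n *ᵥ (A *ᵥ u)) := by
      conv_lhs => rw [← hA]
      rw [← Matrix.mulVec_mulVec, ← Matrix.mulVec_mulVec, Matrix.dotProduct_mulVec,
        ← Matrix.star_mulVec]
    have h2 : star (A *ᵥ u) ⬝ᵥ (J2n n *ᵥ (A *ᵥ u)) = 0 := by
      rw [hAu]
      simp [J2n, Matrix.fromBlocks_mulVec, star_sum_elim, sumElim_dotProduct_sumElim,
        Matrix.neg_mulVec]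
    have h3 : star u ⬝ᵥ (J2n n *ᵥ u) = star x ⬝ᵥ ((Mᴴ - M) *ᵥ x) := by
      rw [hu]
      have h5 : star (M *ᵥ x) ⬝ᵥ x = star x ⬝ᵥ (Mᴴ *ᵥ x) := by
        rw [Matrix.star_mulVec, Matrix.dotProduct_mulVec]
      simp only [J2n, Matrix.fromBlocks_mulVec, star_sum_elim, Sum.elim_comp_inl,
        Sum.elim_comp_inr, sumElim_dotProduct_sumElim, Matrix.zero_mulVec,
        Matrix.one_mulVec, Matrix.neg_mulVec, zero_add, add_zero, Matrix.sub_mulVec,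
        dotProduct_sub, dotProduct_neg, h5]
      ring
    have hq : star x ⬝ᵥ ((M - Mᴴ) *ᵥ x) = 0 := by
      have h0 := h1.trans h2
      rw [h3] at h0
      have hneg : star x ⬝ᵥ ((M - Mᴴ) *ᵥ x) = -(star x ⬝ᵥ ((Mᴴ - M) *ᵥ x)) := by
        simp [Matrix.sub_mulVec, dotProduct_sub]
      rw [hneg, h0, neg_zero]
    have h4 : star x ⬝ᵥ (matIm M *ᵥ x) = 0 := by
      rw [matIm, Matrix.smul_mulVec, dotProduct_smul, hq, smul_zero]
    exact (hM.dotProduct_mulVec_zero_iff x).mp h4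
  refine ⟨key, fun hPD => ?_⟩
  rw [Matrix.isUnit_iff_isUnit_det, isUnit_iff_ne_zero]
  intro hdet
  obtain ⟨v, hv, hv0⟩ := Matrix.exists_mulVec_eq_zero_iff.mpr hdet
  have := hPD.dotProduct_mulVec_pos hv
  rw [key v hv0, dotProduct_zero] at this
  exact lt_irrefl _ this
end

section
/- Let A = (A_{p,q})_{1≤p,q≤2} ∈ 𝒜_{2n}, let M ∈ M_n(ℂ) with A_{1,1} + A_{1,2}M invertible, and set M_A = (A_{2,1} + A_{2,2}M)(A_{1,1} + A_{1,2}M)⁻¹. Then Im(M_A) = ((A_{1,1} + A_{1,2}M)⁻¹)* · Im(M) · (A_{1,1} + A_{1,2}M)⁻¹. -/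
open Matrix
open scoped ComplexOrder

/-- If `A = (A_{p,q}) ∈ 𝒜_{2n}`, `A₁₁ + A₁₂ M` is invertible, and
`M_A = (A₂₁ + A₂₂ M)(A₁₁ + A₁₂ M)⁻¹`, then
`Im M_A = ((A₁₁ + A₁₂ M)⁻¹)* ⬝ Im M ⬝ (A₁₁ + A₁₂ M)⁻¹`. -/
theorem im_linear_fractional_transform {n : ℕ}
    (A11 A12 A21 A22 M : Matrix (Fin n) (Fin n) ℂ)
    (hA : (Matrix.fromBlocks A11 A12 A21 A22)ᴴ * J2n n * Matrix.fromBlocks A11 A12 A21 A22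
      = J2n n)
    (hInv : IsUnit (A11 + A12 * M)) :
    matIm ((A21 + A22 * M) * (A11 + A12 * M)⁻¹) =
      ((A11 + A12 * M)⁻¹)ᴴ * matIm M * (A11 + A12 * M)⁻¹ := by
  -- extract block equations
  rw [J2n, Matrix.fromBlocks_conjTranspose,
    Matrix.fromBlocks_multiply, Matrix.fromBlocks_multiply] at hA
  have h11 := congrArg Matrix.toBlocks₁₁ hA
  have h12 := congrArg Matrix.toBlocks₁₂ hA
  have h21 := congrArg Matrix.toBlocks₂₁ hA
  have h22 := congrArg Matrix.toBlocks₂₂ hA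
  simp only [Matrix.toBlocks_fromBlocks₁₁, Matrix.toBlocks_fromBlocks₁₂,
    Matrix.toBlocks_fromBlocks₂₁, Matrix.toBlocks_fromBlocks₂₂] at h11 h12 h21 h22
  set B := A11 + A12 * M with hB
  set C := A21 + A22 * M with hC
  have key : Bᴴ * C - Cᴴ * B = M - Mᴴ := by
    simp only [hB, hC, Matrix.conjTranspose_add, Matrix.conjTranspose_mul,
      Matrix.mul_zero, Matrix.zero_mul, Matrix.neg_mul, Matrix.mul_neg,
      Matrix.mul_one, Matrix.one_mul, add_zero, zero_add, Matrix.mul_add, Matrix.add_mul] at h11 h12 h21 h22 ⊢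
    -- h11 : -(A11ᴴ*A21) + A21ᴴ*A11 = 0 etc.
    linear_combination (norm := noncomm_ring) -h11 - h12 * M - Mᴴ * h21 - Mᴴ * h22 * M
  have hdet : IsUnit B.det := (Matrix.isUnit_iff_isUnit_det B).mp hInv
  have hBinv : B * B⁻¹ = 1 := Matrix.mul_nonsing_inv B hdet
  have hinvB : B⁻¹ * B = 1 := Matrix.nonsing_inv_mul B hdet
  have main : C * B⁻¹ - (C * B⁻¹)ᴴ = (B⁻¹)ᴴ * (M - Mᴴ) * B⁻¹ := by
    rw [← key]
    have h1 : (B⁻¹)ᴴ * Bᴴ = 1 := by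
      rw [← Matrix.conjTranspose_mul, hBinv, Matrix.conjTranspose_one]
    calc C * B⁻¹ - (C * B⁻¹)ᴴ
        = ((B⁻¹)ᴴ * Bᴴ) * (C * B⁻¹) - (B⁻¹)ᴴ * Cᴴ * (B * B⁻¹) := by
          rw [h1, hBinv, Matrix.conjTranspose_mul]; noncomm_ring
      _ = (B⁻¹)ᴴ * (Bᴴ * C - Cᴴ * B) * B⁻¹ := by noncomm_ring
  simp only [matIm]
  rw [Matrix.mul_smul, Matrix.smul_mul]
  rw [main]
end

section
/- Let A = (A_{p,q})_{1≤p,q≤2} ∈ 𝒜_{2n}, let M ∈ M_n(ℂ) with A_{1,1} + A_{1,2}M invertible, and set M_A = (A_{2,1} + A_{2,2}M)(A_{1,1} + A_{1,2}M)⁻¹. Then (A_{2,2}* − A_{1,2}* M_A)(A_{1,1} + A_{1,2}M) = I_n; in particular, the matrix A_{2,2}* − A_{1,2}* M_A is invertible (has trivial kernel). -/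
open Matrix
open scoped ComplexOrder

/-- If `A = (A_{p,q}) ∈ 𝒜_{2n}`, `A₁₁ + A₁₂ M` is invertible, and
`M_A = (A₂₁ + A₂₂ M)(A₁₁ + A₁₂ M)⁻¹`, then
`(A₂₂* - A₁₂* M_A)(A₁₁ + A₁₂ M) = I_n`; in particular `A₂₂* - A₁₂* M_A` is
invertible (has trivial kernel). -/
theorem identity_for_linear_fractional_transform {n : ℕ}
    (A11 A12 A21 A22 M : Matrix (Fin n) (Fin n) ℂ)
    (hA : (Matrix.fromBlocks A11 A12 A21 A22)ᴴ * J2n n * Matrix.fromBlocks A11 A12 A21 A22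
      = J2n n)
    (hInv : IsUnit (A11 + A12 * M)) :
    (A22ᴴ - A12ᴴ * ((A21 + A22 * M) * (A11 + A12 * M)⁻¹)) * (A11 + A12 * M) = 1 ∧
      IsUnit (A22ᴴ - A12ᴴ * ((A21 + A22 * M) * (A11 + A12 * M)⁻¹)) := by
  rw [J2n, Matrix.fromBlocks_conjTranspose, Matrix.fromBlocks_multiply,
    Matrix.fromBlocks_multiply, Matrix.fromBlocks_inj] at hA
  obtain ⟨-, -, h1, h2⟩ := hA
  have h1 : A22ᴴ * A11 - A12ᴴ * A21 = 1 := by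
    simpa [Matrix.mul_zero, Matrix.zero_mul, Matrix.mul_one, Matrix.mul_neg, sub_eq_add_neg]
      using h1
  have h2 : A22ᴴ * A12 - A12ᴴ * A22 = 0 := by
    simpa [Matrix.mul_zero, Matrix.zero_mul, Matrix.mul_one, Matrix.mul_neg, sub_eq_add_neg]
      using h2
  have hNN : (A11 + A12 * M)⁻¹ * (A11 + A12 * M) = 1 := Matrix.nonsing_inv_mul _
    (Matrix.isUnit_iff_isUnit_det _ |>.mp hInv)
  have key : (A22ᴴ - A12ᴴ * ((A21 + A22 * M) * (A11 + A12 * M)⁻¹)) * (A11 + A12 * M) = 1 := by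
    have : (A22ᴴ - A12ᴴ * ((A21 + A22 * M) * (A11 + A12 * M)⁻¹)) * (A11 + A12 * M)
        = A22ᴴ * (A11 + A12 * M) - A12ᴴ * (A21 + A22 * M) := by
      rw [Matrix.sub_mul, Matrix.mul_assoc (A12ᴴ), Matrix.mul_assoc, hNN, Matrix.mul_one]
    rw [this]
    calc A22ᴴ * (A11 + A12 * M) - A12ᴴ * (A21 + A22 * M)
        = (A22ᴴ * A11 - A12ᴴ * A21) + (A22ᴴ * A12 - A12ᴴ * A22) * M := by
          noncomm_ring
      _ = 1 := by rw [h1, h2]; simp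
  exact ⟨key, IsUnit.of_mul_eq_one _ ((mul_eq_one_comm).mp (mul_eq_one_comm.mp
    key))⟩
end

section
/- Let A = (A_{p,q})_{1≤p,q≤2} ∈ 𝒜_{2n}, let M ∈ M_n(ℂ) with A_{1,1} + A_{1,2}M invertible, and set M_A = (A_{2,1} + A_{2,2}M)(A_{1,1} + A_{1,2}M)⁻¹. Then M = −(A_{2,1}* − A_{1,1}* M_A)(A_{2,2}* − A_{1,2}* M_A)⁻¹ and Im(M) = ((A_{2,2}* − A_{1,2}* M_A)⁻¹)* · Im(M_A) · (A_{2,2}* − A_{1,2}* M_A)⁻¹. -/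
open Matrix
open scoped ComplexOrder

/-- If `A = (A_{p,q}) ∈ 𝒜_{2n}`, `A₁₁ + A₁₂ M` is invertible, and
`M_A = (A₂₁ + A₂₂ M)(A₁₁ + A₁₂ M)⁻¹`, then
`M = -(A₂₁* - A₁₁* M_A)(A₂₂* - A₁₂* M_A)⁻¹` and
`Im M = ((A₂₂* - A₁₂* M_A)⁻¹)* ⬝ Im M_A ⬝ (A₂₂* - A₁₂* M_A)⁻¹`. -/
theorem inverse_linear_fractional_transform {n : ℕ}
    (A11 A12 A21 A22 M : Matrix (Fin n) (Fin n) ℂ)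
    (hA : (Matrix.fromBlocks A11 A12 A21 A22)ᴴ * J2n n * Matrix.fromBlocks A11 A12 A21 A22
      = J2n n)
    (hInv : IsUnit (A11 + A12 * M)) :
    M = -((A21ᴴ - A11ᴴ * ((A21 + A22 * M) * (A11 + A12 * M)⁻¹)) *
        (A22ᴴ - A12ᴴ * ((A21 + A22 * M) * (A11 + A12 * M)⁻¹))⁻¹) ∧
      matIm M =
        ((A22ᴴ - A12ᴴ * ((A21 + A22 * M) * (A11 + A12 * M)⁻¹))⁻¹)ᴴ *
          matIm ((A21 + A22 * M) * (A11 + A12 * M)⁻¹) *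
          (A22ᴴ - A12ᴴ * ((A21 + A22 * M) * (A11 + A12 * M)⁻¹))⁻¹ := by
  rw [Matrix.fromBlocks_conjTranspose] at hA
  simp only [J2n, Matrix.fromBlocks_multiply,
    Matrix.mul_zero, Matrix.zero_mul, Matrix.mul_one, Matrix.one_mul, Matrix.mul_neg,
    Matrix.neg_mul, add_zero, zero_add, Matrix.fromBlocks_inj] at hA
  obtain ⟨e11, e12, e21, e22⟩ := hA
  set Q : Matrix (Fin n) (Fin n) ℂ := A11 + A12 * M with hQdef
  set P : Matrix (Fin n) (Fin n) ℂ := A21 + A22 * M with hPdef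
  have hdet : IsUnit Q.det := (Matrix.isUnit_iff_isUnit_det Q).mp hInv
  have hQl : Q⁻¹ * Q = 1 := Matrix.nonsing_inv_mul Q hdet
  have hQr : Q * Q⁻¹ = 1 := Matrix.mul_nonsing_inv Q hdet
  set MA : Matrix (Fin n) (Fin n) ℂ := P * Q⁻¹ with hMAdef
  -- S * Q = 1
  have hSQ : (A22ᴴ - A12ᴴ * MA) * Q = 1 := by
    have : (A22ᴴ - A12ᴴ * MA) * Q
        = (A22ᴴ * A11 + -(A12ᴴ * A21)) + (A22ᴴ * A12 + -(A12ᴴ * A22)) * M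
          - A12ᴴ * P * (Q⁻¹ * Q - 1) := by
      rw [hMAdef, hPdef, hQdef]; noncomm_ring
    rw [this, hQl, e21, e22]; noncomm_ring
  have hSinv : (A22ᴴ - A12ᴴ * MA)⁻¹ = Q := Matrix.inv_eq_right_inv hSQ
  have hTQ : (A21ᴴ - A11ᴴ * MA) * Q = -M := by
    have : (A21ᴴ - A11ᴴ * MA) * Q
        = (A21ᴴ * A11 + -(A11ᴴ * A21)) + (A21ᴴ * A12 + -(A11ᴴ * A22)) * M
          - A11ᴴ * P * (Q⁻¹ * Q - 1) := by
      rw [hMAdef, hPdef, hQdef]; noncomm_ring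
    rw [this, hQl, e11, e12]; noncomm_ring
  constructor
  · rw [hSinv, hTQ]; simp
  · -- key identity: Qᴴ * (MA - MAᴴ) * Q = M - Mᴴ
    have hQP : Qᴴ * P - Pᴴ * Q = M - Mᴴ := by
      have expand : Qᴴ * P - Pᴴ * Q
          = -(A21ᴴ * A11 + -(A11ᴴ * A21)) + -((A21ᴴ * A12 + -(A11ᴴ * A22)) * M)
            + Mᴴ * (A12ᴴ * A21 + -(A22ᴴ * A11)) + Mᴴ * (A12ᴴ * A22 + -(A22ᴴ * A12)) * M := by
        rw [hQdef, hPdef]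
        simp only [Matrix.conjTranspose_add, Matrix.conjTranspose_mul]
        noncomm_ring
      have e21' : A12ᴴ * A21 + -(A22ᴴ * A11) = -1 := by
        have h : A12ᴴ * A21 + -(A22ᴴ * A11) = -(A22ᴴ * A11 + -(A12ᴴ * A21)) := by abel
        rw [h, e21]
      have e22' : A12ᴴ * A22 + -(A22ᴴ * A12) = 0 := by
        have h : A12ᴴ * A22 + -(A22ᴴ * A12) = -(A22ᴴ * A12 + -(A12ᴴ * A22)) := by abel
        rw [h, e22, neg_zero]
      rw [expand, e11, e12, e21', e22']
      noncomm_ring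
    have hkey : Qᴴ * (MA - MAᴴ) * Q = M - Mᴴ := by
      have h : Qᴴ * (MA - MAᴴ) * Q = Qᴴ * P * (Q⁻¹ * Q) - (Q⁻¹ * Q)ᴴ * (Pᴴ * Q) := by
        rw [hMAdef]
        simp only [Matrix.conjTranspose_mul]
        noncomm_ring
      rw [hQl] at h
      simpa [h] using hQP
    rw [hSinv, matIm, matIm]
    rw [← hkey]
    simp only [Matrix.mul_smul, Matrix.smul_mul]
end

section
/- Let M : ℂ₊ → M_n(ℂ) be an n×n matrix-valued Herglotz function, let A = (A_{p,q})_{1≤p,q≤2} ∈ 𝒜_{2n}, and assume that A_{1,1} + A_{1,2}M(z) is invertible for every z ∈ ℂ₊. Then the map M_A(z) = (A_{2,1} + A_{2,2}M(z))(A_{1,1} + A_{1,2}M(z))⁻¹ is again an n×n matrix-valued Herglotz function, i.e., M_A is analytic on ℂ₊ and Im(M_A(z)) is positive semidefinite for all z ∈ ℂ₊. -/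
open Matrix
open scoped ComplexOrder

/-- Determinant of a matrix with differentiable entries is differentiable. -/
lemma diffOn_det {m : ℕ} {s : Set ℂ} (B : ℂ → Matrix (Fin m) (Fin m) ℂ)
    (h : ∀ i j, DifferentiableOn ℂ (fun z => B z i j) s) :
    DifferentiableOn ℂ (fun z => (B z).det) s := by
  simp only [Matrix.det_apply']
  exact DifferentiableOn.fun_sum fun σ _ =>
    ((differentiableOn_const _).mul (DifferentiableOn.fun_finsetProd fun i _ => h (σ i) i))

/-- If `M` is an `n × n` matrix-valued Herglotz function, `A = (A_{p,q}) ∈ 𝒜_{2n}`, and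
`A₁₁ + A₁₂ M(z)` is invertible for all `z` in the open upper half-plane, then
`M_A(z) = (A₂₁ + A₂₂ M(z))(A₁₁ + A₁₂ M(z))⁻¹` is again a matrix-valued Herglotz function:
it is analytic (entrywise) on the upper half-plane and `Im (M_A(z)) ≥ 0` there. -/
theorem linear_fractional_transform_herglotz {n : ℕ}
    (M : ℂ → Matrix (Fin n) (Fin n) ℂ)
    (hanal : ∀ i j : Fin n, DifferentiableOn ℂ (fun z => M z i j) {z : ℂ | 0 < z.im})
    (hpos : ∀ z : ℂ, 0 < z.im → (matIm (M z)).PosSemidef)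
    (A11 A12 A21 A22 : Matrix (Fin n) (Fin n) ℂ)
    (hA : (Matrix.fromBlocks A11 A12 A21 A22)ᴴ * J2n n * Matrix.fromBlocks A11 A12 A21 A22
      = J2n n)
    (hInv : ∀ z : ℂ, 0 < z.im → IsUnit (A11 + A12 * M z)) :
    (∀ i j : Fin n, DifferentiableOn ℂ
        (fun z => ((A21 + A22 * M z) * (A11 + A12 * M z)⁻¹) i j) {z : ℂ | 0 < z.im}) ∧
      ∀ z : ℂ, 0 < z.im →
        (matIm ((A21 + A22 * M z) * (A11 + A12 * M z)⁻¹)).PosSemidef := by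
  set s : Set ℂ := {z : ℂ | 0 < z.im} with hs
  -- entrywise differentiability of B z := A11 + A12 * M z and C z := A21 + A22 * M z
  have hBent : ∀ (P Q : Matrix (Fin n) (Fin n) ℂ) (i j : Fin n),
      DifferentiableOn ℂ (fun z => (P + Q * M z) i j) s := by
    intro P Q i j
    simp only [Matrix.add_apply, Matrix.mul_apply]
    exact (differentiableOn_const _).add
      (DifferentiableOn.fun_sum fun k _ => (differentiableOn_const _).mul (hanal k j))
  have hdetne : ∀ z ∈ s, (A11 + A12 * M z).det ≠ 0 := by
    intro z hz
    have := (Matrix.isUnit_iff_isUnit_det _).mp (hInv z hz)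
    exact IsUnit.ne_zero this
  have hinvEnt : ∀ i j : Fin n,
      DifferentiableOn ℂ (fun z => (A11 + A12 * M z)⁻¹ i j) s := by
    intro i j
    have heq : ∀ z ∈ s, (A11 + A12 * M z)⁻¹ i j
        = ((A11 + A12 * M z).det)⁻¹ * (A11 + A12 * M z).adjugate i j := by
      intro z hz
      rw [Matrix.inv_def, Ring.inverse_eq_inv, Matrix.smul_apply, smul_eq_mul]
    have hadj : DifferentiableOn ℂ (fun z => (A11 + A12 * M z).adjugate i j) s := by
      simp only [Matrix.adjugate_apply]
      apply diffOn_det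
      intro a b
      by_cases hab : a = j
      · subst hab
        simp only [Matrix.updateRow_self]
        exact differentiableOn_const _
      · simp only [Matrix.updateRow_ne hab]
        exact hBent A11 A12 a b
    exact DifferentiableOn.congr
      ((((diffOn_det _ (hBent A11 A12)).inv hdetne)).mul hadj) heq
  constructor
  · intro i j
    simp only [Matrix.mul_apply]
    exact DifferentiableOn.fun_sum fun k _ => (hBent A21 A22 i k).mul (hinvEnt k j)
  · intro z hz
    set B := A11 + A12 * M z with hBdef
    set C := A21 + A22 * M z with hCdef
    have hU : IsUnit B.det := (Matrix.isUnit_iff_isUnit_det _).mp (hInv z hz)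
    have hBl : B⁻¹ * B = 1 := Matrix.nonsing_inv_mul B hU
    have hBr : B * B⁻¹ = 1 := Matrix.mul_nonsing_inv B hU
    -- block identities from hA
    have hA' := hA
    rw [J2n, Matrix.fromBlocks_conjTranspose, Matrix.fromBlocks_multiply,
      Matrix.fromBlocks_multiply] at hA'
    simp only [Matrix.mul_zero, Matrix.zero_mul, Matrix.mul_one, Matrix.one_mul,
      Matrix.mul_neg, Matrix.neg_mul, zero_add, add_zero, Matrix.mul_one,
      mul_one, neg_add_rev] at hA'
    rw [Matrix.fromBlocks_inj] at hA'
    obtain ⟨h11, h12, h21, h22⟩ := hA'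
    -- key identity
    have key : Bᴴ * C - Cᴴ * B = M z - (M z)ᴴ := by
      have expand : Bᴴ * C - Cᴴ * B
          = (A11ᴴ * A21 - A21ᴴ * A11) + (A11ᴴ * A22 - A21ᴴ * A12) * M z
            + (M z)ᴴ * (A12ᴴ * A21 - A22ᴴ * A11)
            + (M z)ᴴ * (A12ᴴ * A22 - A22ᴴ * A12) * M z := by
        rw [hBdef, hCdef]
        simp only [Matrix.conjTranspose_add, Matrix.conjTranspose_mul]
        noncomm_ring
      rw [expand]
      have e1 : A11ᴴ * A21 - A21ᴴ * A11 = 0 := by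
        linear_combination (norm := abel) -h11
      have e2 : A11ᴴ * A22 - A21ᴴ * A12 = 1 := by
        have := h12
        -- h12 : A21ᴴ * A12 - A11ᴴ * A22 = -1  (or similar)
        linear_combination (norm := abel) -this
      have e3 : A12ᴴ * A21 - A22ᴴ * A11 = -1 := by
        linear_combination (norm := abel) -h21
      have e4 : A12ᴴ * A22 - A22ᴴ * A12 = 0 := by
        linear_combination (norm := abel) -h22
      rw [e1, e2, e3, e4]
      simp only [zero_add, one_mul, Matrix.mul_neg, Matrix.mul_one, Matrix.mul_zero,
        Matrix.zero_mul, add_zero]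
      abel
    -- matIm (C * B⁻¹) = (B⁻¹)ᴴ * matIm (M z) * B⁻¹
    have main : matIm (C * B⁻¹) = (B⁻¹)ᴴ * matIm (M z) * B⁻¹ := by
      have h2 : C * B⁻¹ - (C * B⁻¹)ᴴ = (B⁻¹)ᴴ * (Bᴴ * C - Cᴴ * B) * B⁻¹ := by
        have hBB : (B⁻¹)ᴴ * Bᴴ = 1 := by
          rw [← Matrix.conjTranspose_mul, hBr, Matrix.conjTranspose_one]
        calc C * B⁻¹ - (C * B⁻¹)ᴴ
            = ((B⁻¹)ᴴ * Bᴴ) * (C * B⁻¹) - (B⁻¹)ᴴ * (Cᴴ * (B * B⁻¹)) := by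
              rw [hBB, hBr, Matrix.conjTranspose_mul, Matrix.mul_one, Matrix.one_mul]
          _ = (B⁻¹)ᴴ * (Bᴴ * C - Cᴴ * B) * B⁻¹ := by
              simp only [Matrix.mul_sub, Matrix.sub_mul, Matrix.mul_assoc]
      rw [matIm, matIm, h2, key]
      rw [Matrix.mul_smul, Matrix.smul_mul]
    rw [main]
    exact (hpos z hz).conjTranspose_mul_mul_same B⁻¹
end

section
/- Let A, B ∈ 𝒜_{2n} and M ∈ M_n(ℂ). Assume B_{1,1} + B_{1,2}M is invertible, set M_B(M) = (B_{2,1} + B_{2,2}M)(B_{1,1} + B_{1,2}M)⁻¹, and assume A_{1,1} + A_{1,2}M_B(M) is invertible. Then (AB)_{1,1} + (AB)_{1,2}M is invertible and M_A(M_B(M)) = M_{AB}(M), where for C ∈ 𝒜_{2n} with C_{1,1} + C_{1,2}M invertible one sets M_C(M) = (C_{2,1} + C_{2,2}M)(C_{1,1} + C_{1,2}M)⁻¹. -/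
open Matrix

/-- Composition rule for linear fractional transformations: if `A, B ∈ 𝒜_{2n}`,
`B₁₁ + B₁₂ M` is invertible, `M_B(M) = (B₂₁ + B₂₂ M)(B₁₁ + B₁₂ M)⁻¹`, and
`A₁₁ + A₁₂ M_B(M)` is invertible, then `(AB)₁₁ + (AB)₁₂ M` is invertible and
`M_A(M_B(M)) = M_{AB}(M)`. -/
theorem linear_fractional_transform_comp {n : ℕ}
    (A B : Matrix (Fin n ⊕ Fin n) (Fin n ⊕ Fin n) ℂ)
    (hA : Aᴴ * J2n n * A = J2n n) (hB : Bᴴ * J2n n * B = J2n n)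
    (M : Matrix (Fin n) (Fin n) ℂ)
    (hBInv : IsUnit (B.toBlocks₁₁ + B.toBlocks₁₂ * M))
    (hAInv : IsUnit (A.toBlocks₁₁ + A.toBlocks₁₂ *
      ((B.toBlocks₂₁ + B.toBlocks₂₂ * M) * (B.toBlocks₁₁ + B.toBlocks₁₂ * M)⁻¹))) :
    IsUnit ((A * B).toBlocks₁₁ + (A * B).toBlocks₁₂ * M) ∧
      (A.toBlocks₂₁ + A.toBlocks₂₂ *
          ((B.toBlocks₂₁ + B.toBlocks₂₂ * M) * (B.toBlocks₁₁ + B.toBlocks₁₂ * M)⁻¹)) *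
        (A.toBlocks₁₁ + A.toBlocks₁₂ *
          ((B.toBlocks₂₁ + B.toBlocks₂₂ * M) * (B.toBlocks₁₁ + B.toBlocks₁₂ * M)⁻¹))⁻¹ =
      ((A * B).toBlocks₂₁ + (A * B).toBlocks₂₂ * M) *
        ((A * B).toBlocks₁₁ + (A * B).toBlocks₁₂ * M)⁻¹ := by
  set P := B.toBlocks₁₁ + B.toBlocks₁₂ * M with hP
  set N := (B.toBlocks₂₁ + B.toBlocks₂₂ * M) * P⁻¹ with hN
  have hPdet : IsUnit P.det := (isUnit_iff_isUnit_det P).mp hBInv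
  have hNP : N * P = B.toBlocks₂₁ + B.toBlocks₂₂ * M :=
    Matrix.nonsing_inv_mul_cancel_right _ _ hPdet
  have h11 : (A * B).toBlocks₁₁ =
      A.toBlocks₁₁ * B.toBlocks₁₁ + A.toBlocks₁₂ * B.toBlocks₂₁ := by
    conv_lhs => rw [← fromBlocks_toBlocks A, ← fromBlocks_toBlocks B]
    rw [fromBlocks_multiply, toBlocks_fromBlocks₁₁]
  have h12 : (A * B).toBlocks₁₂ =
      A.toBlocks₁₁ * B.toBlocks₁₂ + A.toBlocks₁₂ * B.toBlocks₂₂ := by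
    conv_lhs => rw [← fromBlocks_toBlocks A, ← fromBlocks_toBlocks B]
    rw [fromBlocks_multiply, toBlocks_fromBlocks₁₂]
  have h21 : (A * B).toBlocks₂₁ =
      A.toBlocks₂₁ * B.toBlocks₁₁ + A.toBlocks₂₂ * B.toBlocks₂₁ := by
    conv_lhs => rw [← fromBlocks_toBlocks A, ← fromBlocks_toBlocks B]
    rw [fromBlocks_multiply, toBlocks_fromBlocks₂₁]
  have h22 : (A * B).toBlocks₂₂ =
      A.toBlocks₂₁ * B.toBlocks₁₂ + A.toBlocks₂₂ * B.toBlocks₂₂ := by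
    conv_lhs => rw [← fromBlocks_toBlocks A, ← fromBlocks_toBlocks B]
    rw [fromBlocks_multiply, toBlocks_fromBlocks₂₂]
  have key1 : (A * B).toBlocks₁₁ + (A * B).toBlocks₁₂ * M =
      (A.toBlocks₁₁ + A.toBlocks₁₂ * N) * P := by
    rw [h11, h12]
    conv_rhs => rw [add_mul, mul_assoc, hNP]
    rw [hP]; noncomm_ring
  have key2 : (A * B).toBlocks₂₁ + (A * B).toBlocks₂₂ * M =
      (A.toBlocks₂₁ + A.toBlocks₂₂ * N) * P := by
    rw [h21, h22]
    conv_rhs => rw [add_mul, mul_assoc, hNP]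
    rw [hP]; noncomm_ring
  refine ⟨by rw [key1]; exact hAInv.mul hBInv, ?_⟩
  rw [key1, key2, Matrix.mul_inv_rev]
  conv_rhs => rw [mul_assoc, ← mul_assoc P, Matrix.mul_nonsing_inv _ hPdet, one_mul]
end

section
/- Let m be a Herglotz function, and let a, b ∈ 𝒜₂ be such that a_{1,1} + a_{1,2}m(z) ≠ 0 and b_{1,1} + b_{1,2}m(z) ≠ 0 for all z ∈ ℂ₊, with m_a(z) = (a_{2,1} + a_{2,2}m(z))/(a_{1,1} + a_{1,2}m(z)) and m_b defined analogously. Assume m_a is not a constant function on ℂ₊. Then m_a(z) = m_b(z) for all z ∈ ℂ₊ if and only if a = γ·b for some γ ∈ ℂ with |γ| = 1. -/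
open Matrix

/-- If `m` is a Herglotz function, `a, b ∈ 𝒜₂` with nonvanishing denominators
`a₁₁ + a₁₂ m(z)` and `b₁₁ + b₁₂ m(z)` on `ℂ₊`, and `m_a` is not constant, then
`m_a = m_b` on `ℂ₊` if and only if `a = γ b` for some unimodular `γ ∈ ℂ`. -/
theorem fractional_transform_eq_iff_unimodular_multiple
    (m : ℂ → ℂ)
    (hanal : DifferentiableOn ℂ m {z : ℂ | 0 < z.im})
    (hmap : ∀ z : ℂ, 0 < z.im → 0 < (m z).im)
    (a b : Matrix (Fin 2) (Fin 2) ℂ)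
    (ha : aᴴ * !![0, -1; 1, 0] * a = !![0, -1; 1, 0])
    (hb : bᴴ * !![0, -1; 1, 0] * b = !![0, -1; 1, 0])
    (hda : ∀ z : ℂ, 0 < z.im → a 0 0 + a 0 1 * m z ≠ 0)
    (hdb : ∀ z : ℂ, 0 < z.im → b 0 0 + b 0 1 * m z ≠ 0)
    (hnc : ¬ ∃ c : ℂ, ∀ z : ℂ, 0 < z.im →
      (a 1 0 + a 1 1 * m z) / (a 0 0 + a 0 1 * m z) = c) :
    (∀ z : ℂ, 0 < z.im →
        (a 1 0 + a 1 1 * m z) / (a 0 0 + a 0 1 * m z) =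
          (b 1 0 + b 1 1 * m z) / (b 0 0 + b 0 1 * m z)) ↔
      ∃ γ : ℂ, ‖γ‖ = 1 ∧ a = γ • b := by
  constructor
  · intro h
    set f : ℂ → ℂ := fun z => (a 1 0 + a 1 1 * m z) / (a 0 0 + a 0 1 * m z) with hf
    -- b has unit determinant
    have hdetj : (!![0, -1; 1, 0] : Matrix (Fin 2) (Fin 2) ℂ).det = 1 := by
      simp [Matrix.det_fin_two_of]
    have hdetb : star b.det * b.det = 1 := by
      have h1 := congrArg Matrix.det hb
      rwa [Matrix.det_mul, Matrix.det_mul, Matrix.det_conjTranspose, hdetj, mul_one] at h1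
    have hub : IsUnit b.det :=
      IsUnit.of_mul_eq_one (a := b.det) (star b.det) (by rw [mul_comm]; exact hdetb)
    set c : Matrix (Fin 2) (Fin 2) ℂ := a * b⁻¹ with hc
    have hcb : c * b = a := Matrix.nonsing_inv_mul_cancel_right b a hub
    clear_value c
    have hent : ∀ p q, a p q = c p 0 * b 0 q + c p 1 * b 1 q := by
      intro p q
      conv_lhs => rw [← hcb]
      rw [Matrix.mul_apply, Fin.sum_univ_two]
    -- each value of f is a fixed point of the Möbius transform of c
    have key : ∀ z : ℂ, 0 < z.im →
        c 0 1 * (f z) ^ 2 + (c 0 0 - c 1 1) * f z - c 1 0 = 0 := by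
      intro z hz
      have hdA := hda z hz
      have hdB := hdb z hz
      have e00 := hent 0 0
      have e01 := hent 0 1
      have e10 := hent 1 0
      have e11 := hent 1 1
      have hfg : f z = (b 1 0 + b 1 1 * m z) / (b 0 0 + b 0 1 * m z) := h z hz
      have hcross : (a 1 0 + a 1 1 * m z) * (b 0 0 + b 0 1 * m z)
          = (b 1 0 + b 1 1 * m z) * (a 0 0 + a 0 1 * m z) :=
        (div_eq_div_iff hdA hdB).mp (h z hz)
      have h1 : c 0 0 + c 0 1 * ((b 1 0 + b 1 1 * m z) / (b 0 0 + b 0 1 * m z))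
          = (a 0 0 + a 0 1 * m z) / (b 0 0 + b 0 1 * m z) := by
        rw [eq_div_iff hdB]
        have hD : (b 0 0 + b 0 1 * m z) * (b 0 0 + b 0 1 * m z)⁻¹ = 1 := mul_inv_cancel₀ hdB
        linear_combination -e00 - m z * e01 + c 0 1 * (b 1 0 + b 1 1 * m z) * hD
      have h2 : c 1 0 + c 1 1 * ((b 1 0 + b 1 1 * m z) / (b 0 0 + b 0 1 * m z))
          = (a 1 0 + a 1 1 * m z) / (b 0 0 + b 0 1 * m z) := by
        rw [eq_div_iff hdB]
        have hD : (b 0 0 + b 0 1 * m z) * (b 0 0 + b 0 1 * m z)⁻¹ = 1 := mul_inv_cancel₀ hdB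
        linear_combination -e10 - m z * e11 + c 1 1 * (b 1 0 + b 1 1 * m z) * hD
      have hfix : c 1 0 + c 1 1 * f z = f z * (c 0 0 + c 0 1 * f z) := by
        rw [hfg, h2, h1, div_mul_div_comm,
          div_eq_div_iff hdB (mul_ne_zero hdB hdB)]
        linear_combination (b 0 0 + b 0 1 * m z) * hcross
      linear_combination -hfix
    -- three points with pairwise distinct values of f
    have hI : (0 : ℝ) < (Complex.I).im := by simp
    push_neg at hnc
    obtain ⟨z₁, hz₁, hne₁'⟩ := hnc (f Complex.I)
    have hne₁ : f z₁ ≠ f Complex.I := hne₁'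
    have hmc : ContinuousOn m {z : ℂ | 0 < z.im} := hanal.continuousOn
    have hfc : ContinuousOn f {z : ℂ | 0 < z.im} := by
      apply ContinuousOn.div
      · exact continuousOn_const.add (continuousOn_const.mul hmc)
      · exact continuousOn_const.add (continuousOn_const.mul hmc)
      · intro z hz; exact hda z hz
    have hpc : IsPreconnected (f '' {z : ℂ | 0 < z.im}) :=
      ((convex_halfSpace_im_gt 0).isPreconnected).image f hfc
    obtain ⟨y, hyS, hy⟩ :=
      hpc ({f z₁}ᶜ) ({f Complex.I}ᶜ) isOpen_compl_singleton isOpen_compl_singleton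
        (by
          intro y hy
          by_cases hcase : y = f z₁
          · right
            simpa [hcase] using hne₁
          · left
            simpa using hcase)
        ⟨f Complex.I, ⟨Complex.I, hI, rfl⟩, by simpa using (Ne.symm hne₁)⟩
        ⟨f z₁, ⟨z₁, hz₁, rfl⟩, by simpa using hne₁⟩
    obtain ⟨z₂, hz₂, hz₂y⟩ := hyS
    rw [← hz₂y] at hy
    have hne₂ : f z₂ ≠ f z₁ := by simpa using hy.1
    have hne₃ : f z₂ ≠ f Complex.I := by simpa using hy.2
    have e₁ := key Complex.I hI
    have e₂ := key z₁ hz₁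
    have e₃ := key z₂ hz₂
    set v₁ := f Complex.I
    set v₂ := f z₁
    set v₃ := f z₂
    have d12 : v₁ - v₂ ≠ 0 := sub_ne_zero.mpr (Ne.symm hne₁)
    have d13 : v₁ - v₃ ≠ 0 := sub_ne_zero.mpr (Ne.symm hne₃)
    have d23 : v₂ - v₃ ≠ 0 := sub_ne_zero.mpr (Ne.symm hne₂)
    have hc01 : c 0 1 = 0 := by
      have h3 : c 0 1 * ((v₁ - v₂) * (v₁ - v₃) * (v₂ - v₃)) = 0 := by
        linear_combination (v₂ - v₃) * e₁ - (v₁ - v₃) * e₂ + (v₁ - v₂) * e₃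
      rcases mul_eq_zero.mp h3 with h4 | h4
      · exact h4
      · exact absurd h4 (mul_ne_zero (mul_ne_zero d12 d13) d23)
    have hcd : c 0 0 - c 1 1 = 0 := by
      have h3 : (c 0 0 - c 1 1) * (v₁ - v₂) = 0 := by
        linear_combination e₁ - e₂ - (v₁ ^ 2 - v₂ ^ 2) * hc01
      rcases mul_eq_zero.mp h3 with h4 | h4
      · exact h4
      · exact absurd h4 d12
    have hc10 : c 1 0 = 0 := by
      linear_combination -e₁ + v₁ ^ 2 * hc01 + v₁ * hcd
    have hc11 : c 1 1 = c 0 0 := by linear_combination -hcd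
    have hab : a = c 0 0 • b := by
      ext p q
      rw [hent p q, Matrix.smul_apply, smul_eq_mul]
      fin_cases p <;> simp [hc01, hc10, hc11]
    refine ⟨c 0 0, ?_, hab⟩
    rw [hab, Matrix.conjTranspose_smul] at ha
    rw [Matrix.smul_mul, Matrix.smul_mul, Matrix.mul_smul, smul_smul, hb] at ha
    have h2 := congrArg (fun M : Matrix (Fin 2) (Fin 2) ℂ => M 1 0) ha
    simp [Matrix.smul_apply] at h2
    have hcast : (Complex.normSq (c 0 0) : ℂ) = 1 := by
      rw [Complex.normSq_eq_conj_mul_self]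
      exact h2
    have hns : Complex.normSq (c 0 0) = 1 := by exact_mod_cast hcast
    simp [Complex.norm_def, hns]
  · rintro ⟨γ, hγ, rfl⟩ z hz
    have hγ0 : γ ≠ 0 := by
      intro h0
      rw [h0] at hγ
      simp at hγ
    simp only [Matrix.smul_apply, smul_eq_mul]
    rw [show γ * b 1 0 + γ * b 1 1 * m z = γ * (b 1 0 + b 1 1 * m z) by ring,
      show γ * b 0 0 + γ * b 0 1 * m z = γ * (b 0 0 + b 0 1 * m z) by ring,
      mul_div_mul_left _ _ hγ0]
end

section
/- Let m be a Herglotz function with Nevanlinna representation m(z) = c + dz + ∫_ℝ ((λ − z)⁻¹ − λ(1 + λ²)⁻¹) dω(λ) for all z ∈ ℂ₊, where c ∈ ℝ, d ≥ 0, and ω is a Borel measure on ℝ with ∫_ℝ (1 + λ²)⁻¹ dω(λ) < ∞. Then for every pair λ₁ < λ₂ of real numbers the Stieltjes inversion formula holds: (1/2)ω({λ₁}) + (1/2)ω({λ₂}) + ω((λ₁, λ₂)) = lim_{ε↓0} π⁻¹ ∫_{λ₁}^{λ₂} Im(m(λ + iε)) dλ. -/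
set_option maxHeartbeats 1000000

open MeasureTheory Filter Topology

noncomputable section StieltjesAux

namespace StieltjesAux

open Real

/-- The Poisson kernel. -/
def P (ε t : ℝ) : ℝ := ε / (t ^ 2 + ε ^ 2)

lemma inner_int {ε : ℝ} (hε : 0 < ε) (t l₁ l₂ : ℝ) :
    ∫ l in l₁..l₂, P ε (t - l) = arctan ((l₂ - t)/ε) - arctan ((l₁ - t)/ε) := by
  have key : ∀ l : ℝ, HasDerivAt (fun l : ℝ => arctan ((l - t)/ε)) (P ε (t - l)) l := by
    intro l
    have h1 : HasDerivAt (fun l : ℝ => (l - t)/ε) (1/ε) l := by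
      simpa using ((hasDerivAt_id l).sub_const t).div_const ε
    have := (Real.hasDerivAt_arctan ((l - t)/ε)).comp l h1
    refine this.congr_deriv (Eq.symm ?_)
    simp only [P]
    rw [div_eq_iff (by positivity)]
    field_simp
    ring
  rw [intervalIntegral.integral_eq_sub_of_hasDerivAt (fun l _ => key l)]
  · exact ((continuous_const.div ((continuous_sub_left t).pow 2 |>.add continuous_const)
      (fun l => by dsimp only [Pi.add_apply, Pi.pow_apply]; positivity)).continuousOn).intervalIntegrable

lemma integrable_inv_one_add_sq_omega (ω : Measure ℝ)
    (hω : (∫⁻ l : ℝ, ENNReal.ofReal ((1 + l ^ 2)⁻¹) ∂ω) < ⊤) :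
    Integrable (fun t : ℝ => (1 + t ^ 2)⁻¹) ω := by
  refine ⟨Continuous.aestronglyMeasurable
    ((continuous_const.add (continuous_pow 2)).inv₀ (fun t => by positivity : ∀ t : ℝ, 1 + t ^ 2 ≠ 0)), ?_⟩
  rw [hasFiniteIntegral_iff_norm]
  convert hω using 3 with t
  rw [Real.norm_eq_abs, abs_of_nonneg (by positivity)]

lemma meas_Icc_lt_top (ω : Measure ℝ)
    (hω : (∫⁻ l : ℝ, ENNReal.ofReal ((1 + l ^ 2)⁻¹) ∂ω) < ⊤)
    (a b : ℝ) : ω (Set.Icc a b) < ⊤ := by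
  set M : ℝ := max |a| |b| with hM
  have key : ENNReal.ofReal ((1 + M ^ 2)⁻¹) * ω (Set.Icc a b)
      ≤ ∫⁻ l : ℝ, ENNReal.ofReal ((1 + l ^ 2)⁻¹) ∂ω := by
    rw [← setLIntegral_const (Set.Icc a b) (ENNReal.ofReal ((1 + M ^ 2)⁻¹))]
    refine le_trans (setLIntegral_mono (by fun_prop) ?_) (setLIntegral_le_lintegral _ _)
    intro t ht
    apply ENNReal.ofReal_le_ofReal
    apply inv_anti₀ (by positivity)
    have h1 : |t| ≤ M := by
      rcases ht with ⟨h1, h2⟩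
      rw [abs_le]
      refine ⟨?_, ?_⟩
      · calc -M ≤ -|a| := by simp [hM]
          _ ≤ a := neg_abs_le a
          _ ≤ t := h1
      · calc t ≤ b := h2
          _ ≤ |b| := le_abs_self b
          _ ≤ M := le_max_right _ _
    nlinarith [abs_nonneg t, sq_abs t]
  have hne : ENNReal.ofReal ((1 + M ^ 2)⁻¹) ≠ 0 := by
    simp only [ne_eq, ENNReal.ofReal_eq_zero, not_le]
    positivity
  exact ENNReal.lt_top_of_mul_ne_top_right (ne_top_of_le_ne_top hω.ne key) hne

lemma omega_sigmaFinite (ω : Measure ℝ)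
    (hω : (∫⁻ l : ℝ, ENNReal.ofReal ((1 + l ^ 2)⁻¹) ∂ω) < ⊤) :
    SigmaFinite ω := by
  refine ⟨⟨⟨fun n => Set.Icc (-(n:ℝ)) n, fun _ => trivial,
    fun n => meas_Icc_lt_top ω hω _ _, ?_⟩⟩⟩
  ext x
  simp only [Set.mem_iUnion, Set.mem_Icc, Set.mem_univ, iff_true]
  exact ⟨⌈|x|⌉₊, by
    have := Nat.le_ceil |x|
    constructor
    · linarith [neg_abs_le x, abs_nonneg x]
    · linarith [le_abs_self x]⟩

lemma complex_integrand_integrable (ω : Measure ℝ)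
    (hωi : Integrable (fun t : ℝ => (1 + t ^ 2)⁻¹) ω)
    {z : ℂ} (hz : 0 < z.im) :
    Integrable (fun t : ℝ => ((t : ℂ) - z)⁻¹ - (t : ℂ) * (1 + (t : ℂ) ^ 2)⁻¹) ω := by
  have hne : ∀ t : ℝ, (t : ℂ) - z ≠ 0 := by
    intro t h
    have : ((t : ℂ) - z).im = 0 := by rw [h]; simp
    simp only [Complex.sub_im, Complex.ofReal_im] at this
    linarith
  have hne2 : ∀ t : ℝ, (1 : ℂ) + (t : ℂ) ^ 2 ≠ 0 := by
    intro t
    have : (1 : ℂ) + (t : ℂ) ^ 2 = ((1 + t ^ 2 : ℝ) : ℂ) := by push_cast; ring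
    rw [this]
    exact_mod_cast (by positivity : (1 + t ^ 2 : ℝ) ≠ 0)
  have hcont : Continuous (fun t : ℝ => ((t : ℂ) - z)⁻¹ - (t : ℂ) * (1 + (t : ℂ) ^ 2)⁻¹) :=
    ((Complex.continuous_ofReal.sub continuous_const).inv₀ hne).sub
      (Complex.continuous_ofReal.mul
        ((continuous_const.add (Complex.continuous_ofReal.pow 2)).inv₀ hne2))
  set C : ℝ := max ((1 + (2 * ‖z‖ + 1) * ‖z‖) / z.im) (2 * (1 + ‖z‖)) with hC
  refine (hωi.const_mul C).mono' hcont.aestronglyMeasurable (Eventually.of_forall fun t => ?_)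
  have key : ((t : ℂ) - z)⁻¹ - (t : ℂ) * (1 + (t : ℂ) ^ 2)⁻¹
      = (1 + (t : ℂ) * z) / (((t : ℂ) - z) * (1 + (t : ℂ) ^ 2)) := by
    field_simp [hne t, hne2 t]
    ring
  have hnorm2 : ‖(1 : ℂ) + (t : ℂ) ^ 2‖ = 1 + t ^ 2 := by
    have : (1 : ℂ) + (t : ℂ) ^ 2 = ((1 + t ^ 2 : ℝ) : ℂ) := by push_cast; ring
    rw [this, Complex.norm_real, Real.norm_eq_abs, abs_of_nonneg (by positivity)]
  rw [key, norm_div, norm_mul, hnorm2]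
  have htz : ‖(t : ℂ) - z‖ ≥ z.im := by
    calc z.im = |((t : ℂ) - z).im| := by
          simp only [Complex.sub_im, Complex.ofReal_im]
          rw [abs_of_nonpos (by linarith)]; ring
      _ ≤ ‖(t : ℂ) - z‖ := Complex.abs_im_le_norm _
  have hnum : ‖(1 : ℂ) + (t : ℂ) * z‖ ≤ 1 + |t| * ‖z‖ := by
    calc ‖(1 : ℂ) + (t : ℂ) * z‖ ≤ ‖(1 : ℂ)‖ + ‖(t : ℂ) * z‖ := norm_add_le _ _
      _ = 1 + |t| * ‖z‖ := by rw [norm_one, norm_mul, Complex.norm_real, Real.norm_eq_abs]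
  have hfrac : ‖(1 : ℂ) + (t : ℂ) * z‖ / ‖(t : ℂ) - z‖ ≤ C := by
    rcases le_or_gt (|t|) (2 * ‖z‖ + 1) with h | h
    · refine le_trans ?_ (le_max_left _ _)
      apply div_le_div₀ (by positivity) (hnum.trans (by nlinarith [norm_nonneg z])) hz htz
    · refine le_trans ?_ (le_max_right _ _)
      have htpos : (1 : ℝ) ≤ |t| := by nlinarith [norm_nonneg z]
      have hdenom : |t| / 2 ≤ ‖(t : ℂ) - z‖ := by
        have := norm_sub_norm_le ((t : ℂ)) z
        rw [Complex.norm_real, Real.norm_eq_abs] at this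
        nlinarith [norm_nonneg z]
      have h1 : ‖(1 : ℂ) + (t : ℂ) * z‖ ≤ |t| * (1 + ‖z‖) := by nlinarith
      calc ‖(1 : ℂ) + (t : ℂ) * z‖ / ‖(t : ℂ) - z‖ ≤ (|t| * (1 + ‖z‖)) / (|t| / 2) := by
            apply div_le_div₀ (by positivity) h1 (by positivity) hdenom
        _ = 2 * (1 + ‖z‖) := by field_simp
  have hd : (0:ℝ) < ‖(t : ℂ) - z‖ := lt_of_lt_of_le hz htz
  calc ‖(1 + (t : ℂ) * z)‖ / (‖(t : ℂ) - z‖ * (1 + t ^ 2))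
      = (‖(1 + (t : ℂ) * z)‖ / ‖(t : ℂ) - z‖) * (1 + t ^ 2)⁻¹ := by
        rw [div_mul_eq_div_div, div_eq_mul_inv]
    _ ≤ C * (1 + t ^ 2)⁻¹ := by
        apply mul_le_mul_of_nonneg_right hfrac (by positivity)

lemma im_formula (m : ℂ → ℂ) (c d : ℝ) (ω : Measure ℝ)
    (hrep : ∀ z : ℂ, 0 < z.im →
      m z = (c : ℂ) + (d : ℂ) * z +
        ∫ l : ℝ, (((l : ℂ) - z)⁻¹ - (l : ℂ) * (1 + (l : ℂ) ^ 2)⁻¹) ∂ω)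
    (hint : ∀ z : ℂ, 0 < z.im →
      Integrable (fun t : ℝ => ((t : ℂ) - z)⁻¹ - (t : ℂ) * (1 + (t : ℂ) ^ 2)⁻¹) ω)
    {ε : ℝ} (hε : 0 < ε) (l : ℝ) :
    (m ((l : ℝ) + ε * Complex.I)).im = d * ε + ∫ t, P ε (t - l) ∂ω := by
  set z : ℂ := (l : ℝ) + ε * Complex.I with hz
  have hzim : z.im = ε := by simp [hz]
  have hzpos : 0 < z.im := by rw [hzim]; exact hε
  rw [hrep z hzpos]
  simp only [Complex.add_im, Complex.mul_im, Complex.ofReal_re, Complex.ofReal_im]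
  have hii := integral_im (𝕜 := ℂ) (hint z hzpos)
  simp only [← RCLike.im_eq_complex_im]
  rw [← hii]
  simp only [RCLike.im_eq_complex_im]
  have him : ∀ t : ℝ, (((t : ℂ) - z)⁻¹ - (t : ℂ) * (1 + (t : ℂ) ^ 2)⁻¹).im = P ε (t - l) := by
    intro t
    have h2 : ((t : ℂ) * (1 + (t : ℂ) ^ 2)⁻¹).im = 0 := by
      have : (t : ℂ) * (1 + (t : ℂ) ^ 2)⁻¹ = ((t * (1 + t ^ 2)⁻¹ : ℝ) : ℂ) := by
        push_cast [Complex.ofReal_inv]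
        ring
      rw [this, Complex.ofReal_im]
    rw [Complex.sub_im, h2, Complex.inv_im]
    have hre : ((t : ℂ) - z).re = t - l := by simp [hz]
    have him' : ((t : ℂ) - z).im = -ε := by simp [hz]
    rw [Complex.normSq_apply, hre, him']
    simp only [P]
    ring_nf
  simp only [him]
  rw [hzim]
  ring

lemma fubini_step (ω : Measure ℝ) [SigmaFinite ω]
    (hωi : Integrable (fun t : ℝ => (1 + t ^ 2)⁻¹) ω)
    {ε : ℝ} (hε : 0 < ε) (l₁ l₂ : ℝ) (hl : l₁ < l₂) :
    (∫ l in l₁..l₂, (∫ t, P ε (t - l) ∂ω)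
      = ∫ t, (arctan ((l₂ - t)/ε) - arctan ((l₁ - t)/ε)) ∂ω)
    ∧ IntervalIntegrable (fun l => ∫ t, P ε (t - l) ∂ω) volume l₁ l₂ := by
  have hcont : Continuous (fun p : ℝ × ℝ => P ε (p.2 - p.1)) := by
    apply Continuous.div (by fun_prop) (by fun_prop)
    intro p; positivity
  set μ : Measure ℝ := volume.restrict (Set.Ioc l₁ l₂) with hμ
  set M : ℝ := max |l₁| |l₂| with hM
  set K : ℝ := 2 * ε + (1 + 2 * M ^ 2) / ε with hK
  have hbound : ∀ l ∈ Set.Ioc l₁ l₂, ∀ t : ℝ, P ε (t - l) ≤ K * (1 + t ^ 2)⁻¹ := by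
    intro l hlmem t
    have hlM : |l| ≤ M := by
      rw [abs_le]
      rcases hlmem with ⟨h1, h2⟩
      refine ⟨?_, ?_⟩
      · calc -M ≤ -|l₁| := by simp [hM]
          _ ≤ l₁ := neg_abs_le l₁
          _ ≤ l := le_of_lt h1
      · calc l ≤ l₂ := h2
          _ ≤ |l₂| := le_abs_self l₂
          _ ≤ M := le_max_right _ _
    rw [P, div_le_iff₀ (by positivity)]
    rw [mul_comm K _, mul_assoc, ← div_le_iff₀' (by positivity : (0:ℝ) < (1 + t^2)⁻¹),
      div_eq_mul_inv, inv_inv]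
    have hsq : t ^ 2 ≤ 2 * (t - l) ^ 2 + 2 * l ^ 2 := by nlinarith [sq_nonneg (t - 2*l)]
    have hl2 : l ^ 2 ≤ M ^ 2 := by nlinarith [abs_nonneg l, sq_abs l]
    rw [hK]
    have hKε : (1 + 2 * M ^ 2) * ε ≤ (2 * ε + (1 + 2 * M ^ 2) / ε) * ε ^ 2 := by
      have h0 : (1 + 2 * M ^ 2) / ε * ε ^ 2 = (1 + 2 * M ^ 2) * ε := by
        field_simp
      nlinarith [sq_nonneg ε]
    nlinarith [hKε, mul_le_mul_of_nonneg_left hsq hε.le,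
      mul_le_mul_of_nonneg_left hl2 hε.le, sq_nonneg (t - l),
      div_nonneg (by positivity : (0:ℝ) ≤ 1 + 2 * M ^ 2) hε.le]
  have hint : Integrable (Function.uncurry fun l t => P ε (t - l)) (μ.prod ω) := by
    have hgint : Integrable
        (fun p : ℝ × ℝ => (fun _ : ℝ => K) p.1 * (fun t : ℝ => (1 + t ^ 2)⁻¹) p.2) (μ.prod ω) :=
      Integrable.mul_prod (integrable_const K) hωi
    refine Integrable.mono' hgint (hcont.aestronglyMeasurable) ?_
    have hae : ∀ᵐ p : ℝ × ℝ ∂(μ.prod ω), p.1 ∈ Set.Ioc l₁ l₂ := by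
      rw [hμ, Measure.restrict_prod_eq_prod_univ]
      have : ∀ᵐ p : ℝ × ℝ ∂((volume.prod ω).restrict ((Set.Ioc l₁ l₂) ×ˢ Set.univ)),
          p ∈ (Set.Ioc l₁ l₂) ×ˢ (Set.univ : Set ℝ) :=
        ae_restrict_mem ((measurableSet_Ioc).prod MeasurableSet.univ)
      filter_upwards [this] with p hp
      exact hp.1
    filter_upwards [hae] with p hp
    simp only [Function.uncurry]
    rw [Real.norm_eq_abs, P, abs_of_pos (div_pos hε (by positivity))]
    exact hbound p.1 hp p.2
  constructor
  · calc ∫ l in l₁..l₂, (∫ t, P ε (t - l) ∂ω)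
        = ∫ l, (∫ t, P ε (t - l) ∂ω) ∂μ := by
          rw [hμ, intervalIntegral.integral_of_le (le_of_lt hl)]
      _ = ∫ t, (∫ l, P ε (t - l) ∂μ) ∂ω := integral_integral_swap hint
      _ = ∫ t, (arctan ((l₂ - t)/ε) - arctan ((l₁ - t)/ε)) ∂ω := by
          congr 1
          ext t
          rw [hμ, ← intervalIntegral.integral_of_le (le_of_lt hl)]
          exact inner_int hε t l₁ l₂
  · rw [intervalIntegrable_iff_integrableOn_Ioc_of_le (le_of_lt hl)]
    exact hint.integral_prod_left

lemma arctan_sub_le {x y : ℝ} (h0 : 0 ≤ y) (hxy : y ≤ x) :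
    arctan x - arctan y ≤ (x - y) / (1 + y ^ 2) := by
  have key := norm_image_sub_le_of_norm_deriv_le_segment'
    (f := arctan) (f' := fun u => (1 + u ^ 2)⁻¹) (C := (1 + y ^ 2)⁻¹) (a := y) (b := x)
    (fun u _ => (Real.hasDerivAt_arctan' u).hasDerivWithinAt)
    (fun u hu => by
      rw [Real.norm_eq_abs, abs_of_pos (by positivity)]
      apply inv_anti₀ (by positivity)
      nlinarith [hu.1])
    x (Set.right_mem_Icc.2 hxy)
  rw [Real.norm_eq_abs] at key
  calc arctan x - arctan y ≤ |arctan x - arctan y| := le_abs_self _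
    _ ≤ (1 + y ^ 2)⁻¹ * (x - y) := key
    _ = (x - y) / (1 + y ^ 2) := by ring

/-- The pointwise limit function. -/
def g0 (l₁ l₂ : ℝ) : ℝ → ℝ := fun t =>
  Set.indicator {l₁} (fun _ => π / 2) t + Set.indicator {l₂} (fun _ => π / 2) t
    + Set.indicator (Set.Ioo l₁ l₂) (fun _ => π) t

lemma tendsto_div_atTop {c : ℝ} (hc : 0 < c) :
    Tendsto (fun ε : ℝ => c / ε) (𝓝[>] (0:ℝ)) atTop := by
  simpa [div_eq_mul_inv] using tendsto_inv_nhdsGT_zero.const_mul_atTop hc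

lemma tendsto_arctan_div_top {c : ℝ} (hc : 0 < c) :
    Tendsto (fun ε : ℝ => arctan (c / ε)) (𝓝[>] (0:ℝ)) (𝓝 (π / 2)) :=
  (tendsto_nhds_of_tendsto_nhdsWithin Real.tendsto_arctan_atTop).comp (tendsto_div_atTop hc)

lemma tendsto_arctan_div_bot {c : ℝ} (hc : c < 0) :
    Tendsto (fun ε : ℝ => arctan (c / ε)) (𝓝[>] (0:ℝ)) (𝓝 (-(π / 2))) := by
  have h1 : Tendsto (fun ε : ℝ => arctan ((-c) / ε)) (𝓝[>] (0:ℝ)) (𝓝 (π / 2)) :=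
    tendsto_arctan_div_top (by linarith)
  have h2 : (fun ε : ℝ => arctan (c / ε)) = fun ε : ℝ => -arctan ((-c) / ε) := by
    funext ε
    rw [← Real.arctan_neg]
    ring_nf
  rw [h2]
  exact h1.neg

lemma dct_step (ω : Measure ℝ)
    (hωi : Integrable (fun t : ℝ => (1 + t ^ 2)⁻¹) ω)
    (l₁ l₂ : ℝ) (hl : l₁ < l₂) :
    Tendsto (fun ε : ℝ => ∫ t, (arctan ((l₂ - t)/ε) - arctan ((l₁ - t)/ε)) ∂ω)
      (𝓝[>] (0:ℝ)) (𝓝 (∫ t, g0 l₁ l₂ t ∂ω)) := by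
  set B : ℝ := max |l₁ - 1| |l₂ + 1| with hB
  set Ma : ℝ := max |l₁| |l₂| with hMa
  set K : ℝ := π * (1 + B ^ 2) + (l₂ - l₁) * (3 + 2 * Ma ^ 2) with hK
  have hMa1 : |l₁| ≤ Ma := le_max_left _ _
  have hMa2 : |l₂| ≤ Ma := le_max_right _ _
  have hKpos2 : (0:ℝ) ≤ (l₂ - l₁) * (3 + 2 * Ma ^ 2) := by
    apply mul_nonneg (by linarith) (by positivity)
  have hKb : ∀ u : ℝ, |u| ≤ B → π ≤ K * (1 + u ^ 2)⁻¹ := by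
    intro u hu
    rw [hK, le_mul_inv_iff₀ (by positivity)]
    have h1 : u ^ 2 ≤ B ^ 2 := by nlinarith [abs_nonneg u, sq_abs u]
    nlinarith [Real.pi_pos]
  have hKeq : K = π * (1 + B ^ 2) + (l₂ - l₁) * (3 + 2 * Ma ^ 2) := hK
  clear_value B Ma K
  refine tendsto_integral_filter_of_dominated_convergence
    (bound := fun t => K * (1 + t ^ 2)⁻¹) ?_ ?_ (hωi.const_mul K) ?_
  · -- measurability
    filter_upwards [self_mem_nhdsWithin] with ε (hε : 0 < ε)
    apply Continuous.aestronglyMeasurable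
    exact (Real.continuous_arctan.comp ((continuous_const.sub continuous_id).div_const ε)).sub
      (Real.continuous_arctan.comp ((continuous_const.sub continuous_id).div_const ε))
  · -- bound
    filter_upwards [Ioc_mem_nhdsGT (zero_lt_one (α := ℝ))] with ε hε
    obtain ⟨hε0, hε1⟩ := hε
    refine Eventually.of_forall fun t => ?_
    have hdivle : (l₁ - t)/ε ≤ (l₂ - t)/ε := by
      rw [div_eq_mul_inv, div_eq_mul_inv]
      exact mul_le_mul_of_nonneg_right (by linarith) (by positivity)
    have hF0 : 0 ≤ arctan ((l₂ - t)/ε) - arctan ((l₁ - t)/ε) :=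
      sub_nonneg.2 (Real.arctan_strictMono.monotone hdivle)
    rw [Real.norm_eq_abs, abs_of_nonneg hF0]
    rcases le_or_gt t (l₂ + 1) with hcase1 | hcase1
    · rcases le_or_gt (l₁ - 1) t with hcase2 | hcase2
      · -- middle region: bound by π
        have htB : |t| ≤ B := by
          rw [abs_le]
          constructor
          · calc -B ≤ -|l₁ - 1| := by simp [hB]
              _ ≤ l₁ - 1 := neg_abs_le _
              _ ≤ t := hcase2
          · calc t ≤ l₂ + 1 := hcase1
              _ ≤ |l₂ + 1| := le_abs_self _
              _ ≤ B := by rw [hB]; exact le_max_right _ _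
        have hπ : arctan ((l₂ - t)/ε) - arctan ((l₁ - t)/ε) ≤ π := by
          have h1 := Real.arctan_lt_pi_div_two ((l₂ - t)/ε)
          have h2 := Real.neg_pi_div_two_lt_arctan ((l₁ - t)/ε)
          linarith
        exact hπ.trans (hKb t htB)
      · -- left tail: t < l₁ - 1
        have hy0 : (0:ℝ) ≤ (l₁ - t)/ε := div_nonneg (by linarith) hε0.le
        have key := arctan_sub_le hy0 hdivle
        refine key.trans ?_
        have e2 : ((l₂ - t)/ε - (l₁ - t)/ε) / (1 + ((l₁ - t)/ε) ^ 2)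
            = ε * (l₂ - l₁) / (ε ^ 2 + (l₁ - t) ^ 2) := by
          field_simp
          ring
        rw [e2, ← div_eq_mul_inv (K) _, div_le_div_iff₀ (by positivity) (by positivity)]
        have hs1 : (1:ℝ) ≤ (l₁ - t) ^ 2 := by nlinarith
        have hs2 : t ^ 2 ≤ 2 * (l₁ - t) ^ 2 + 2 * l₁ ^ 2 := by nlinarith [sq_nonneg (t - 2*l₁)]
        have hs3 : l₁ ^ 2 ≤ Ma ^ 2 := by nlinarith [abs_nonneg l₁, sq_abs l₁]
        have h4 : 1 + t ^ 2 ≤ (3 + 2 * Ma ^ 2) * (l₁ - t) ^ 2 := by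
          nlinarith [mul_le_mul_of_nonneg_left hs1 (sq_nonneg Ma)]
        rw [hKeq]
        nlinarith [mul_le_mul_of_nonneg_left h4
            (mul_nonneg hε0.le (by linarith : (0:ℝ) ≤ l₂ - l₁)),
          mul_nonneg (mul_nonneg (by linarith : (0:ℝ) ≤ 1 - ε) hKpos2) (sq_nonneg (l₁ - t)),
          mul_nonneg (mul_nonneg Real.pi_pos.le (by positivity : (0:ℝ) ≤ 1 + B ^ 2))
            (sq_nonneg (l₁ - t)),
          mul_nonneg (mul_nonneg Real.pi_pos.le (by positivity : (0:ℝ) ≤ 1 + B ^ 2))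
            (sq_nonneg ε),
          mul_nonneg hKpos2 (sq_nonneg ε)]
    · -- right tail: t > l₂ + 1
      have e1 : arctan ((l₂ - t)/ε) - arctan ((l₁ - t)/ε)
          = arctan ((t - l₁)/ε) - arctan ((t - l₂)/ε) := by
        rw [show (l₂ - t)/ε = -((t - l₂)/ε) by ring, show (l₁ - t)/ε = -((t - l₁)/ε) by ring,
          Real.arctan_neg, Real.arctan_neg]
        ring
      rw [e1]
      have hy0 : (0:ℝ) ≤ (t - l₂)/ε := div_nonneg (by linarith) hε0.le
      have hdivle' : (t - l₂)/ε ≤ (t - l₁)/ε := by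
        rw [div_eq_mul_inv, div_eq_mul_inv]
        exact mul_le_mul_of_nonneg_right (by linarith) (by positivity)
      have key := arctan_sub_le hy0 hdivle'
      refine key.trans ?_
      have e2 : ((t - l₁)/ε - (t - l₂)/ε) / (1 + ((t - l₂)/ε) ^ 2)
          = ε * (l₂ - l₁) / (ε ^ 2 + (t - l₂) ^ 2) := by
        field_simp
        ring
      rw [e2, ← div_eq_mul_inv (K) _, div_le_div_iff₀ (by positivity) (by positivity)]
      have hs1 : (1:ℝ) ≤ (t - l₂) ^ 2 := by nlinarith
      have hs2 : t ^ 2 ≤ 2 * (t - l₂) ^ 2 + 2 * l₂ ^ 2 := by nlinarith [sq_nonneg (t - 2*l₂)]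
      have hs3 : l₂ ^ 2 ≤ Ma ^ 2 := by nlinarith [abs_nonneg l₂, sq_abs l₂]
      have h4 : 1 + t ^ 2 ≤ (3 + 2 * Ma ^ 2) * (t - l₂) ^ 2 := by
        nlinarith [mul_le_mul_of_nonneg_left hs1 (sq_nonneg Ma)]
      rw [hKeq]
      nlinarith [mul_le_mul_of_nonneg_left h4
          (mul_nonneg hε0.le (by linarith : (0:ℝ) ≤ l₂ - l₁)),
        mul_nonneg (mul_nonneg (by linarith : (0:ℝ) ≤ 1 - ε) hKpos2) (sq_nonneg (t - l₂)),
        mul_nonneg (mul_nonneg Real.pi_pos.le (by positivity : (0:ℝ) ≤ 1 + B ^ 2))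
          (sq_nonneg (t - l₂)),
        mul_nonneg (mul_nonneg Real.pi_pos.le (by positivity : (0:ℝ) ≤ 1 + B ^ 2))
          (sq_nonneg ε),
        mul_nonneg hKpos2 (sq_nonneg ε)]
  · -- pointwise limit
    refine Eventually.of_forall fun t => ?_
    rcases lt_trichotomy t l₁ with h1 | h1 | h1
    · have hT := (tendsto_arctan_div_top (by linarith : (0:ℝ) < l₂ - t)).sub
        (tendsto_arctan_div_top (by linarith : (0:ℝ) < l₁ - t))
      convert hT using 2
      simp [g0, Set.indicator_apply, Set.mem_singleton_iff, h1.ne, (h1.trans hl).ne,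
        Set.mem_Ioo, not_lt.2 h1.le]
    · subst h1
      have hT := (tendsto_arctan_div_top (by linarith : (0:ℝ) < l₂ - t)).sub
        (tendsto_const_nhds (x := (0:ℝ)) (f := 𝓝[>] (0:ℝ)))
      have hfun : (fun ε : ℝ => arctan ((l₂ - t)/ε) - arctan ((t - t)/ε))
          = fun ε : ℝ => arctan ((l₂ - t)/ε) - 0 := by
        funext ε
        simp
      rw [hfun]
      convert hT using 2
      simp [g0, Set.indicator_apply, Set.mem_singleton_iff, hl.ne, Set.mem_Ioo, lt_irrefl]
    · rcases lt_trichotomy t l₂ with h2 | h2 | h2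
      · have hT := (tendsto_arctan_div_top (by linarith : (0:ℝ) < l₂ - t)).sub
          (tendsto_arctan_div_bot (by linarith : l₁ - t < 0))
        convert hT using 2
        have hg : g0 l₁ l₂ t = π := by
          simp [g0, Set.indicator_apply, Set.mem_singleton_iff, h1.ne', h2.ne,
            Set.mem_Ioo, h1, h2]
        rw [hg]
        ring
      · subst h2
        have hT := (tendsto_const_nhds (x := (0:ℝ)) (f := 𝓝[>] (0:ℝ))).sub
          (tendsto_arctan_div_bot (by linarith : l₁ - t < 0))
        have hfun : (fun ε : ℝ => arctan ((t - t)/ε) - arctan ((l₁ - t)/ε))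
            = fun ε : ℝ => 0 - arctan ((l₁ - t)/ε) := by
          funext ε
          simp
        rw [hfun]
        convert hT using 2
        have hg : g0 l₁ t t = π / 2 := by
          simp [g0, Set.indicator_apply, Set.mem_singleton_iff, hl.ne', Set.mem_Ioo, lt_irrefl]
        rw [hg]
        ring
      · have hT := (tendsto_arctan_div_bot (by linarith : l₂ - t < 0)).sub
          (tendsto_arctan_div_bot (by linarith : l₁ - t < 0))
        convert hT using 2
        have hg : g0 l₁ l₂ t = 0 := by
          simp [g0, Set.indicator_apply, Set.mem_singleton_iff, (hl.trans h2).ne', h2.ne',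
            Set.mem_Ioo, not_lt.2 h2.le]
        rw [hg]
        ring

lemma g0_integral (ω : Measure ℝ) (l₁ l₂ : ℝ)
    (h1 : ω {l₁} < ⊤) (h2 : ω {l₂} < ⊤) (h3 : ω (Set.Ioo l₁ l₂) < ⊤) :
    ∫ t, g0 l₁ l₂ t ∂ω
      = π / 2 * (ω {l₁}).toReal + π / 2 * (ω {l₂}).toReal + π * (ω (Set.Ioo l₁ l₂)).toReal := by
  have i1 : Integrable (Set.indicator {l₁} (fun _ => π / 2)) ω :=
    (integrable_indicator_iff (measurableSet_singleton l₁)).2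
      (integrableOn_const h1.ne)
  have i2 : Integrable (Set.indicator {l₂} (fun _ => π / 2)) ω :=
    (integrable_indicator_iff (measurableSet_singleton l₂)).2
      (integrableOn_const h2.ne)
  have i3 : Integrable (Set.indicator (Set.Ioo l₁ l₂) (fun _ => π)) ω :=
    (integrable_indicator_iff measurableSet_Ioo).2
      (integrableOn_const h3.ne)
  simp only [g0]
  have e := integral_add (i1.add i2) i3
  simp only [Pi.add_apply] at e
  rw [e, integral_add i1 i2,
    integral_indicator_const _ (measurableSet_singleton l₁),
    integral_indicator_const _ (measurableSet_singleton l₂),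
    integral_indicator_const _ measurableSet_Ioo]
  simp only [smul_eq_mul, measureReal_def]
  ring

end StieltjesAux

/-- Stieltjes inversion formula: if `m` is a Herglotz function with Nevanlinna representation
measure `ω`, then for `λ₁ < λ₂`,
`ω({λ₁})/2 + ω({λ₂})/2 + ω((λ₁,λ₂)) = lim_{ε↓0} π⁻¹ ∫_{λ₁}^{λ₂} Im m(λ + iε) dλ`. -/
theorem stieltjes_inversion
    (m : ℂ → ℂ)
    (hanal : DifferentiableOn ℂ m {z : ℂ | 0 < z.im})
    (hmap : ∀ z : ℂ, 0 < z.im → 0 < (m z).im)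
    (c d : ℝ) (ω : Measure ℝ) (hd : 0 ≤ d)
    (hω : (∫⁻ l : ℝ, ENNReal.ofReal ((1 + l ^ 2)⁻¹) ∂ω) < ⊤)
    (hrep : ∀ z : ℂ, 0 < z.im →
      m z = (c : ℂ) + (d : ℂ) * z +
        ∫ l : ℝ, (((l : ℂ) - z)⁻¹ - (l : ℂ) * (1 + (l : ℂ) ^ 2)⁻¹) ∂ω)
    (l₁ l₂ : ℝ) (hl : l₁ < l₂) :
    Tendsto (fun ε : ℝ => (Real.pi)⁻¹ * ∫ l in l₁..l₂, (m ((l : ℂ) + ε * Complex.I)).im)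
      (𝓝[>] 0)
      (𝓝 ((ω {l₁}).toReal / 2 + (ω {l₂}).toReal / 2 + (ω (Set.Ioo l₁ l₂)).toReal)) := by
  open StieltjesAux Real in
  haveI : SigmaFinite ω := omega_sigmaFinite ω hω
  have hωi : Integrable (fun t : ℝ => (1 + t ^ 2)⁻¹) ω :=
    integrable_inv_one_add_sq_omega ω hω
  have hint : ∀ z : ℂ, 0 < z.im →
      Integrable (fun t : ℝ => ((t : ℂ) - z)⁻¹ - (t : ℂ) * (1 + (t : ℂ) ^ 2)⁻¹) ω :=
    fun z hz => complex_integrand_integrable ω hωi hz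
  -- finiteness of the relevant measures
  have hIcc : ω (Set.Icc l₁ l₂) < ⊤ := meas_Icc_lt_top ω hω l₁ l₂
  have hfin1 : ω {l₁} < ⊤ :=
    lt_of_le_of_lt (measure_mono (by simp [Set.singleton_subset_iff, hl.le])) hIcc
  have hfin2 : ω {l₂} < ⊤ :=
    lt_of_le_of_lt (measure_mono (by simp [Set.singleton_subset_iff, hl.le])) hIcc
  have hfin3 : ω (Set.Ioo l₁ l₂) < ⊤ :=
    lt_of_le_of_lt (measure_mono Set.Ioo_subset_Icc_self) hIcc
  -- eventual rewriting of the function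
  have heq : ∀ᶠ ε in 𝓝[>] (0:ℝ),
      π⁻¹ * (d * ε * (l₂ - l₁) + ∫ t, (arctan ((l₂ - t)/ε) - arctan ((l₁ - t)/ε)) ∂ω)
        = π⁻¹ * ∫ l in l₁..l₂, (m ((l : ℂ) + ε * Complex.I)).im := by
    filter_upwards [self_mem_nhdsWithin] with ε (hε : 0 < ε)
    congr 1
    have h1 : ∫ l in l₁..l₂, (m ((l : ℂ) + ε * Complex.I)).im
        = ∫ l in l₁..l₂, (d * ε + ∫ t, P ε (t - l) ∂ω) := by
      apply intervalIntegral.integral_congr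
      intro l _
      exact im_formula m c d ω hrep hint hε l
    have hfub := fubini_step ω hωi hε l₁ l₂ hl
    rw [h1, intervalIntegral.integral_add (intervalIntegrable_const) hfub.2,
      intervalIntegral.integral_const, hfub.1, smul_eq_mul]
    ring
  -- the limit
  have hT1 : Tendsto (fun ε : ℝ => d * ε * (l₂ - l₁)) (𝓝[>] (0:ℝ)) (𝓝 0) := by
    have : Tendsto (fun ε : ℝ => d * ε * (l₂ - l₁)) (𝓝 (0:ℝ)) (𝓝 (d * 0 * (l₂ - l₁))) := by
      exact (continuous_const.mul continuous_id |>.mul continuous_const).tendsto 0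
    simpa using this.mono_left nhdsWithin_le_nhds
  have hT2 := dct_step ω hωi l₁ l₂ hl
  have hT := ((hT1.add hT2).const_mul (π⁻¹)).congr' heq
  convert hT using 2
  rw [g0_integral ω l₁ l₂ hfin1 hfin2 hfin3]
  have hπ : π ≠ 0 := Real.pi_ne_zero
  field_simp
  ring
end StieltjesAux
end

section
/- Let m be a Herglotz function with Nevanlinna representation m(z) = c + dz + ∫_ℝ ((λ − z)⁻¹ − λ(1 + λ²)⁻¹) dω(λ) for all z ∈ ℂ₊, where c ∈ ℝ, d ≥ 0, and ω is a Borel measure on ℝ with ∫_ℝ (1 + λ²)⁻¹ dω(λ) < ∞. Let ω_s denote the singular part of ω with respect to Lebesgue measure. Then the set S = {λ ∈ ℝ : Im(m(λ + iε)) → +∞ as ε↓0} is a minimal support of ω_s relative to Lebesgue measure. -/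
open MeasureTheory Filter Topology Metric Set
open scoped ENNReal


lemma aux_norm_bound (z : ℂ) (hz : 0 < z.im) (t : ℝ) :
    ‖((t:ℂ) - z)⁻¹ - (t:ℂ) * (1 + (t:ℂ) ^ 2)⁻¹‖ ≤
      ((1 + ‖z‖ ^ 2) / z.im + ‖z‖) * (1 + t ^ 2)⁻¹ := by
  have ht2 : (0:ℝ) < 1 + t ^ 2 := by positivity
  have h1 : (1 : ℂ) + (t:ℂ) ^ 2 = ((1 + t ^ 2 : ℝ) : ℂ) := by push_cast; ring
  have h1ne : (1 : ℂ) + (t:ℂ) ^ 2 ≠ 0 := by rw [h1]; exact_mod_cast ht2.ne'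
  have htz : ((t:ℂ) - z) ≠ 0 := by
    intro h
    have : ((t:ℂ) - z).im = 0 := by rw [h]; simp
    simp [Complex.sub_im, hz.ne] at this
    exact hz.ne' this
  have him : z.im ≤ ‖(t:ℂ) - z‖ := by
    have : |((t:ℂ) - z).im| ≤ ‖(t:ℂ) - z‖ := Complex.abs_im_le_norm _
    rw [Complex.sub_im] at this
    simp only [Complex.ofReal_im, zero_sub, abs_neg] at this
    exact (le_abs_self z.im).trans this
  have key : ((t:ℂ) - z)⁻¹ - (t:ℂ) * (1 + (t:ℂ) ^ 2)⁻¹ =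
      (1 + (t:ℂ) * z) / (((t:ℂ) - z) * (1 + (t:ℂ) ^ 2)) := by
    field_simp
    ring
  rw [key]
  rw [norm_div, norm_mul]
  rw [h1]
  have hnorm1 : ‖((1 + t ^ 2 : ℝ) : ℂ)‖ = 1 + t ^ 2 := by
    rw [Complex.norm_real]; exact abs_of_pos ht2
  rw [hnorm1, div_mul_eq_div_div, div_eq_mul_inv (_ / _)]
  have hK : (0:ℝ) ≤ (1 + t^2)⁻¹ := by positivity
  have hpos : (0:ℝ) < ‖(t:ℂ) - z‖ := lt_of_lt_of_le hz him
  have hmain : ‖1 + (t:ℂ) * z‖ / ‖(t:ℂ) - z‖ ≤ (1 + ‖z‖ ^ 2) / z.im + ‖z‖ := by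
    rw [div_le_iff₀ hpos]
    have h3 : ‖(t:ℂ)‖ ≤ ‖(t:ℂ) - z‖ + ‖z‖ := by
      calc ‖(t:ℂ)‖ = ‖((t:ℂ) - z) + z‖ := by ring_nf
      _ ≤ ‖(t:ℂ) - z‖ + ‖z‖ := norm_add_le _ _
    have h2 : ‖1 + (t:ℂ) * z‖ ≤ 1 + ‖(t:ℂ)‖ * ‖z‖ := by
      calc ‖1 + (t:ℂ) * z‖ ≤ ‖(1:ℂ)‖ + ‖(t:ℂ) * z‖ := norm_add_le _ _
      _ = 1 + ‖(t:ℂ)‖ * ‖z‖ := by rw [norm_one, norm_mul]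
    have h4 : (1 + ‖z‖ ^ 2) ≤ (1 + ‖z‖ ^ 2) / z.im * ‖(t:ℂ) - z‖ := by
      rw [div_mul_eq_mul_div, le_div_iff₀ hz]
      nlinarith [norm_nonneg z]
    calc ‖1 + (t:ℂ) * z‖ ≤ 1 + (‖(t:ℂ) - z‖ + ‖z‖) * ‖z‖ := by nlinarith [norm_nonneg z]
    _ = (1 + ‖z‖ ^ 2) + ‖(t:ℂ) - z‖ * ‖z‖ := by ring
    _ ≤ (1 + ‖z‖ ^ 2) / z.im * ‖(t:ℂ) - z‖ + ‖z‖ * ‖(t:ℂ) - z‖ := by linarith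
    _ = ((1 + ‖z‖ ^ 2) / z.im + ‖z‖) * ‖(t:ℂ) - z‖ := by ring
  exact mul_le_mul_of_nonneg_right hmain hK

lemma aux_weight_integrable (ω : Measure ℝ)
    (hω : (∫⁻ l : ℝ, ENNReal.ofReal ((1 + l ^ 2)⁻¹) ∂ω) < ⊤) (K : ℝ) :
    Integrable (fun t : ℝ => K * (1 + t ^ 2)⁻¹) ω := by
  have hm : Measurable (fun t : ℝ => (1 + t ^ 2)⁻¹) := by measurability
  have h1 : Integrable (fun t : ℝ => (1 + t ^ 2)⁻¹) ω := by
    refine ⟨hm.aestronglyMeasurable, ?_⟩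
    rw [hasFiniteIntegral_iff_norm]
    have : ∀ t : ℝ, ENNReal.ofReal ‖(1 + t ^ 2)⁻¹‖ = ENNReal.ofReal ((1 + t ^ 2)⁻¹) := by
      intro t
      rw [Real.norm_eq_abs, abs_of_pos (by positivity)]
    simp_rw [this]
    exact hω
  exact h1.const_mul K

lemma aux_integrable (ω : Measure ℝ)
    (hω : (∫⁻ l : ℝ, ENNReal.ofReal ((1 + l ^ 2)⁻¹) ∂ω) < ⊤)
    (z : ℂ) (hz : 0 < z.im) :
    Integrable (fun t : ℝ => ((t:ℂ) - z)⁻¹ - (t:ℂ) * (1 + (t:ℂ) ^ 2)⁻¹) ω := by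
  have hcont : Continuous (fun t : ℝ => ((t:ℂ) - z)⁻¹ - (t:ℂ) * (1 + (t:ℂ) ^ 2)⁻¹) := by
    apply Continuous.sub
    · apply Continuous.inv₀ (by continuity)
      intro t
      intro h
      have : ((t:ℂ) - z).im = 0 := by rw [h]; simp
      simp [Complex.sub_im] at this
      exact hz.ne' this
    · apply Continuous.mul Complex.continuous_ofReal
      apply Continuous.inv₀ (by continuity)
      intro t
      have h1 : (1 : ℂ) + (t:ℂ) ^ 2 = ((1 + t ^ 2 : ℝ) : ℂ) := by push_cast; ring
      rw [h1]
      exact_mod_cast (by positivity : (0:ℝ) < 1 + t^2).ne'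
  refine Integrable.mono' (aux_weight_integrable ω hω ((1 + ‖z‖ ^ 2) / z.im + ‖z‖))
    hcont.aestronglyMeasurable ?_
  exact Filter.Eventually.of_forall (aux_norm_bound z hz)

lemma aux_im_kernel (z : ℂ) (hz : 0 < z.im) (t : ℝ) :
    (((t:ℂ) - z)⁻¹ - (t:ℂ) * (1 + (t:ℂ) ^ 2)⁻¹).im = z.im / ((t - z.re) ^ 2 + z.im ^ 2) := by
  have h1 : (1 : ℂ) + (t:ℂ) ^ 2 = ((1 + t ^ 2 : ℝ) : ℂ) := by push_cast; ring
  have h2 : ((t:ℂ) * (1 + (t:ℂ) ^ 2)⁻¹).im = 0 := by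
    rw [h1, ← Complex.ofReal_inv, ← Complex.ofReal_mul]
    exact Complex.ofReal_im _
  rw [Complex.sub_im, h2, sub_zero, Complex.inv_im]
  simp only [Complex.normSq_apply, Complex.sub_re, Complex.sub_im, Complex.ofReal_im,
    Complex.ofReal_re, zero_sub, neg_neg]
  ring_nf

lemma aux_im_formula (m : ℂ → ℂ) (c d : ℝ) (ω : Measure ℝ)
    (hω : (∫⁻ l : ℝ, ENNReal.ofReal ((1 + l ^ 2)⁻¹) ∂ω) < ⊤)
    (hrep : ∀ z : ℂ, 0 < z.im →
      m z = (c : ℂ) + (d : ℂ) * z +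
        ∫ l : ℝ, (((l : ℂ) - z)⁻¹ - (l : ℂ) * (1 + (l : ℂ) ^ 2)⁻¹) ∂ω)
    (l e : ℝ) (he : 0 < e) :
    (m ((l:ℂ) + e * Complex.I)).im = d * e + ∫ t : ℝ, e / ((t - l) ^ 2 + e ^ 2) ∂ω := by
  set z : ℂ := (l:ℂ) + e * Complex.I with hzdef
  have hz : z.im = e := by simp [hzdef]
  have hzre : z.re = l := by simp [hzdef]
  have hz0 : 0 < z.im := by rw [hz]; exact he
  rw [hrep z hz0]
  have hint := aux_integrable ω hω z hz0
  have him : (∫ t : ℝ, (((t:ℂ) - z)⁻¹ - (t:ℂ) * (1 + (t:ℂ) ^ 2)⁻¹) ∂ω).im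
      = ∫ t : ℝ, e / ((t - l) ^ 2 + e ^ 2) ∂ω := by
    have h2 := integral_im (𝕜 := ℂ) hint
    simp only [RCLike.im_to_complex] at h2
    rw [← h2]
    apply integral_congr_ae
    filter_upwards with t
    rw [aux_im_kernel z hz0 t, hz, hzre]
  simp only [Complex.add_im, Complex.mul_im, Complex.ofReal_im, Complex.ofReal_re]
  rw [him, hz]
  ring

lemma aux_ball_finite (ω : Measure ℝ)
    (hω : (∫⁻ l : ℝ, ENNReal.ofReal ((1 + l ^ 2)⁻¹) ∂ω) < ⊤)
    (x r : ℝ) : ω (closedBall x r) < ⊤ := by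
  set C : ℝ := 1 + (|x| + |r|) ^ 2 with hC
  have hCpos : (0:ℝ) < C := by positivity
  have key : ∀ t ∈ closedBall x r, ENNReal.ofReal C⁻¹ ≤ ENNReal.ofReal ((1 + t ^ 2)⁻¹) := by
    intro t ht
    apply ENNReal.ofReal_le_ofReal
    apply inv_anti₀ (by positivity)
    rw [mem_closedBall, Real.dist_eq] at ht
    have h1 : |t| ≤ |x| + |r| := by
      have := abs_sub_abs_le_abs_sub t x
      have : |t| ≤ |t - x| + |x| := by
        calc |t| = |(t - x) + x| := by ring_nf
        _ ≤ |t - x| + |x| := abs_add_le _ _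
      linarith [le_abs_self r, ht, this, abs_nonneg r]
    nlinarith [abs_nonneg t, sq_abs t, sq_abs (|x| + |r|) ]
  have : ENNReal.ofReal C⁻¹ * ω (closedBall x r)
      ≤ ∫⁻ t : ℝ, ENNReal.ofReal ((1 + t ^ 2)⁻¹) ∂ω := by
    calc ENNReal.ofReal C⁻¹ * ω (closedBall x r)
        = ∫⁻ _ in closedBall x r, ENNReal.ofReal C⁻¹ ∂ω := by
          rw [setLIntegral_const, mul_comm]
    _ ≤ ∫⁻ t in closedBall x r, ENNReal.ofReal ((1 + t ^ 2)⁻¹) ∂ω := by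
          apply setLIntegral_mono' measurableSet_closedBall key
    _ ≤ ∫⁻ t : ℝ, ENNReal.ofReal ((1 + t ^ 2)⁻¹) ∂ω := setLIntegral_le_lintegral _ _
  have hne : ENNReal.ofReal C⁻¹ ≠ 0 := by
    simp [ENNReal.ofReal_eq_zero, not_le, inv_pos, hCpos]
  by_contra h
  rw [not_lt, top_le_iff] at h
  rw [h, ENNReal.mul_top hne] at this
  exact hω.ne (top_le_iff.mp this)

lemma aux_kernel_integrable (ω : Measure ℝ)
    (hω : (∫⁻ l : ℝ, ENNReal.ofReal ((1 + l ^ 2)⁻¹) ∂ω) < ⊤)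
    (l e : ℝ) (he : 0 < e) :
    Integrable (fun t : ℝ => e / ((t - l) ^ 2 + e ^ 2)) ω := by
  set z : ℂ := (l:ℂ) + e * Complex.I with hzdef
  have hz0 : 0 < z.im := by simp [hzdef, he]
  have h := (aux_integrable ω hω z hz0).im
  refine h.congr (Filter.Eventually.of_forall fun t => ?_)
  simp only [RCLike.im_to_complex]
  rw [aux_im_kernel z hz0 t]
  simp [hzdef]

lemma aux_locfin (ω : Measure ℝ)
    (hω : (∫⁻ l : ℝ, ENNReal.ofReal ((1 + l ^ 2)⁻¹) ∂ω) < ⊤) :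
    IsLocallyFiniteMeasure ω :=
  ⟨fun x => ⟨closedBall x 1, closedBall_mem_nhds x one_pos, aux_ball_finite ω hω x 1⟩⟩

lemma aux_lower (ω ωac ωs : Measure ℝ) (hdecomp : ω = ωac + ωs)
    (hω : (∫⁻ l : ℝ, ENNReal.ofReal ((1 + l ^ 2)⁻¹) ∂ω) < ⊤)
    (l e : ℝ) (he : 0 < e) :
    (ωs (closedBall l e)).toReal / (2 * e) ≤ ∫ t : ℝ, e / ((t - l) ^ 2 + e ^ 2) ∂ω := by
  have hfint := aux_kernel_integrable ω hω l e he
  have hnonneg : ∀ t : ℝ, 0 ≤ e / ((t - l) ^ 2 + e ^ 2) := fun t => by positivity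
  have hsub : ωs ≤ ω := hdecomp ▸ Measure.le_add_left le_rfl
  have hfints : Integrable (fun t : ℝ => e / ((t - l) ^ 2 + e ^ 2)) ωs := by
    rw [hdecomp, integrable_add_measure] at hfint
    exact hfint.2
  have hfinta : Integrable (fun t : ℝ => e / ((t - l) ^ 2 + e ^ 2)) ωac := by
    rw [hdecomp, integrable_add_measure] at hfint
    exact hfint.1
  have hballfin : ωs (closedBall l e) ≠ ⊤ :=
    (lt_of_le_of_lt (hsub _) (aux_ball_finite ω hω l e)).ne
  have h1 : (1 / (2 * e)) * (ωs (closedBall l e)).toReal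
      ≤ ∫ t in closedBall l e, e / ((t - l) ^ 2 + e ^ 2) ∂ωs := by
    apply setIntegral_ge_of_const_le_real measurableSet_closedBall hballfin
    · intro t ht
      rw [mem_closedBall, Real.dist_eq] at ht
      rw [div_le_div_iff₀ (by positivity) (by positivity)]
      have : (t - l) ^ 2 ≤ e ^ 2 := by
        rw [← sq_abs]
        exact pow_le_pow_left₀ (abs_nonneg _) ht 2
      nlinarith
    · exact hfints.integrableOn
  have h2 : ∫ t in closedBall l e, e / ((t - l) ^ 2 + e ^ 2) ∂ωs
      ≤ ∫ t : ℝ, e / ((t - l) ^ 2 + e ^ 2) ∂ωs :=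
    setIntegral_le_integral hfints (Filter.Eventually.of_forall hnonneg)
  have h3 : ∫ t : ℝ, e / ((t - l) ^ 2 + e ^ 2) ∂ωs
      ≤ ∫ t : ℝ, e / ((t - l) ^ 2 + e ^ 2) ∂ω := by
    rw [hdecomp, integral_add_measure hfinta hfints]
    have : 0 ≤ ∫ t : ℝ, e / ((t - l) ^ 2 + e ^ 2) ∂ωac :=
      integral_nonneg hnonneg
    linarith
  calc (ωs (closedBall l e)).toReal / (2 * e)
      = (1 / (2 * e)) * (ωs (closedBall l e)).toReal := by ring
  _ ≤ _ := le_trans h1 (le_trans h2 h3)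

lemma aux_part1 (m : ℂ → ℂ) (c d : ℝ) (ω : Measure ℝ) (hd : 0 ≤ d)
    (hω : (∫⁻ l : ℝ, ENNReal.ofReal ((1 + l ^ 2)⁻¹) ∂ω) < ⊤)
    (hrep : ∀ z : ℂ, 0 < z.im →
      m z = (c : ℂ) + (d : ℂ) * z +
        ∫ l : ℝ, (((l : ℂ) - z)⁻¹ - (l : ℂ) * (1 + (l : ℂ) ^ 2)⁻¹) ∂ω)
    (ωac ωs : Measure ℝ) (hdecomp : ω = ωac + ωs)
    (hs : Measure.MutuallySingular ωs volume) :
    ∀ᵐ (l : ℝ) ∂ωs, Tendsto (fun ε : ℝ => (m ((l : ℂ) + ε * Complex.I)).im) (𝓝[>] 0) atTop := by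
  have hsub : ωs ≤ ω := hdecomp ▸ Measure.le_add_left le_rfl
  haveI : IsLocallyFiniteMeasure ωs :=
    ⟨fun x => ⟨closedBall x 1, closedBall_mem_nhds x one_pos,
      lt_of_le_of_lt (hsub _) (aux_ball_finite ω hω x 1)⟩⟩
  have hrn : volume.rnDeriv ωs =ᵐ[ωs] 0 := (Measure.rnDeriv_eq_zero volume ωs).mpr hs.symm
  filter_upwards [Besicovitch.ae_tendsto_rnDeriv volume ωs, hrn] with l hl hl0
  simp only [Pi.zero_apply] at hl0
  rw [hl0] at hl
  rw [Filter.tendsto_atTop]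
  intro M
  have hc : (0:ℝ≥0∞) < ENNReal.ofReal (1 / (2 * (|M| + 1))) := by
    rw [ENNReal.ofReal_pos]; positivity
  have hev1 : ∀ᶠ ε in 𝓝[>] (0:ℝ),
      volume (closedBall l ε) / ωs (closedBall l ε) < ENNReal.ofReal (1 / (2 * (|M| + 1))) :=
    hl (Iio_mem_nhds hc)
  have hev2 : ∀ᶠ ε in 𝓝[>] (0:ℝ), 0 < ε := self_mem_nhdsWithin
  filter_upwards [hev1, hev2] with ε hε1 hε2
  -- derive ωs cb ≠ 0, ≠ ⊤
  have hvol : volume (closedBall l ε) = ENNReal.ofReal (2 * ε) := Real.volume_closedBall l ε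
  have hne0 : ωs (closedBall l ε) ≠ 0 := by
    intro h0
    rw [h0, ENNReal.div_zero (by rw [hvol]; simp [ENNReal.ofReal_eq_zero]; positivity)] at hε1
    exact (not_lt_of_ge le_top) hε1
  have hnet : ωs (closedBall l ε) ≠ ⊤ :=
    (lt_of_le_of_lt (hsub _) (aux_ball_finite ω hω l ε)).ne
  rw [ENNReal.div_lt_iff (Or.inl hne0) (Or.inl hnet)] at hε1
  -- convert to reals
  have hto : 2 * ε < (1 / (2 * (|M| + 1))) * (ωs (closedBall l ε)).toReal := by
    have := ENNReal.toReal_strict_mono (by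
        exact ENNReal.mul_ne_top ENNReal.ofReal_ne_top hnet) hε1
    rwa [hvol, ENNReal.toReal_ofReal (by positivity), ENNReal.toReal_mul,
      ENNReal.toReal_ofReal (by positivity)] at this
  have hlow := aux_lower ω ωac ωs hdecomp hω l ε hε2
  rw [aux_im_formula m c d ω hω hrep l ε hε2]
  have h4 : 4 * ε * (|M| + 1) < (ωs (closedBall l ε)).toReal := by
    rw [div_mul_eq_mul_div, lt_div_iff₀ (by positivity)] at hto
    nlinarith
  have h5 : 2 * (|M| + 1) ≤ (ωs (closedBall l ε)).toReal / (2 * ε) := by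
    rw [le_div_iff₀ (by positivity)]
    nlinarith
  have : M ≤ 2 * (|M| + 1) := by
    have := le_abs_self M
    linarith [abs_nonneg M]
  have hde : 0 ≤ d * ε := by positivity
  linarith

lemma aux_good_ae (ω : Measure ℝ)
    (hω : (∫⁻ l : ℝ, ENNReal.ofReal ((1 + l ^ 2)⁻¹) ∂ω) < ⊤) :
    ∀ᵐ (l : ℝ) ∂(volume : Measure ℝ), ∃ C : ℝ, 0 < C ∧
      ∀ r : ℝ, 0 < r → r ≤ 1 → ω (closedBall l r) ≤ ENNReal.ofReal (C * r) := by
  haveI : IsLocallyFiniteMeasure ω :=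
    ⟨fun x => ⟨closedBall x 1, closedBall_mem_nhds x one_pos, aux_ball_finite ω hω x 1⟩⟩
  filter_upwards [Besicovitch.ae_tendsto_rnDeriv ω volume,
    Measure.rnDeriv_lt_top ω volume] with l hl hfin
  set D : ℝ := (ω.rnDeriv volume l).toReal with hD
  have hDnn : 0 ≤ D := ENNReal.toReal_nonneg
  have hlim : ω.rnDeriv volume l < ENNReal.ofReal (D + 1) := by
    rw [← ENNReal.ofReal_toReal hfin.ne]
    exact ENNReal.ofReal_lt_ofReal_iff_of_nonneg hDnn |>.mpr (by linarith)
  have hev : ∀ᶠ r in 𝓝[>] (0:ℝ),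
      ω (closedBall l r) / volume (closedBall l r) < ENNReal.ofReal (D + 1) :=
    hl (Iio_mem_nhds hlim)
  obtain ⟨δ, hδmem, hδ⟩ := mem_nhdsGT_iff_exists_Ioc_subset.mp hev
  rw [mem_Ioi] at hδmem
  set δ' : ℝ := min δ 1 with hδ'
  have hδ'pos : 0 < δ' := lt_min hδmem one_pos
  have hδ'le : δ' ≤ 1 := min_le_right _ _
  set E : ℝ := (ω (closedBall l 1)).toReal with hE
  have hEnn : 0 ≤ E := ENNReal.toReal_nonneg
  refine ⟨2 * (D + 1) + E / δ' + 1, by positivity, fun r hr hr1 => ?_⟩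
  rcases le_or_gt r δ' with hcase | hcase
  · have hmem : ω (closedBall l r) / volume (closedBall l r) < ENNReal.ofReal (D + 1) :=
      hδ ⟨hr, hcase.trans (min_le_left _ _)⟩
    have hvol : volume (closedBall l r) = ENNReal.ofReal (2 * r) := Real.volume_closedBall l r
    have hvne0 : volume (closedBall l r) ≠ 0 := by
      rw [hvol]; simp [ENNReal.ofReal_eq_zero]; positivity
    have hvnet : volume (closedBall l r) ≠ ⊤ := by rw [hvol]; exact ENNReal.ofReal_ne_top
    rw [ENNReal.div_lt_iff (Or.inl hvne0) (Or.inl hvnet)] at hmem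
    calc ω (closedBall l r) ≤ ENNReal.ofReal (D + 1) * volume (closedBall l r) := hmem.le
    _ = ENNReal.ofReal ((D + 1) * (2 * r)) := by
        rw [hvol, ← ENNReal.ofReal_mul (by linarith)]
    _ ≤ ENNReal.ofReal ((2 * (D + 1) + E / δ' + 1) * r) := by
        apply ENNReal.ofReal_le_ofReal
        have h1 : 0 ≤ E / δ' := by positivity
        nlinarith
  · calc ω (closedBall l r) ≤ ω (closedBall l 1) :=
        measure_mono (closedBall_subset_closedBall hr1)
    _ = ENNReal.ofReal E := (ENNReal.ofReal_toReal (aux_ball_finite ω hω l 1).ne).symm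
    _ ≤ ENNReal.ofReal ((2 * (D + 1) + E / δ' + 1) * r) := by
        apply ENNReal.ofReal_le_ofReal
        have h2 : E ≤ E / δ' * r := by
          rw [div_mul_eq_mul_div, le_div_iff₀ hδ'pos]
          nlinarith
        nlinarith

lemma aux_upper (ω : Measure ℝ)
    (hω : (∫⁻ l : ℝ, ENNReal.ofReal ((1 + l ^ 2)⁻¹) ∂ω) < ⊤)
    (l : ℝ) (C : ℝ) (hC : 0 < C)
    (hgood : ∀ r : ℝ, 0 < r → r ≤ 1 → ω (closedBall l r) ≤ ENNReal.ofReal (C * r)) :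
    ∃ B : ℝ, ∀ e : ℝ, 0 < e → e ≤ 1 →
      (∫ t : ℝ, e / ((t - l) ^ 2 + e ^ 2) ∂ω) ≤ B := by
  set C₁ : ℝ := 1 + (1 + |l|) ^ 2 with hC₁
  have hC₁pos : 0 < C₁ := by positivity
  set Bnd : ℝ≥0∞ := ENNReal.ofReal (5 * C) + ENNReal.ofReal C₁ *
    (∫⁻ t : ℝ, ENNReal.ofReal ((1 + t ^ 2)⁻¹) ∂ω) with hBnd
  have hBndne : Bnd ≠ ⊤ := by
    apply ENNReal.add_ne_top.mpr
    exact ⟨ENNReal.ofReal_ne_top, ENNReal.mul_ne_top ENNReal.ofReal_ne_top hω.ne⟩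
  refine ⟨Bnd.toReal, fun e he he1 => ?_⟩
  have hker_nonneg : ∀ t : ℝ, 0 ≤ e / ((t - l) ^ 2 + e ^ 2) := fun t => by positivity
  have hden : Measurable fun t : ℝ => (t - l) ^ 2 + e ^ 2 :=
    ((measurable_id.sub_const l).pow_const 2).add_const _
  have hker_meas : Measurable (fun t : ℝ => e / ((t - l) ^ 2 + e ^ 2)) :=
    measurable_const.div hden
  have hw_meas : Measurable fun t : ℝ => ENNReal.ofReal ((1 + t ^ 2)⁻¹) :=
    ((measurable_const.add (measurable_id.pow_const 2)).inv).ennreal_ofReal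
  -- express as lintegral
  have heq : (∫ t : ℝ, e / ((t - l) ^ 2 + e ^ 2) ∂ω)
      = (∫⁻ t : ℝ, ENNReal.ofReal (e / ((t - l) ^ 2 + e ^ 2)) ∂ω).toReal := by
    rw [integral_eq_lintegral_of_nonneg_ae (Filter.Eventually.of_forall hker_nonneg)
      hker_meas.aestronglyMeasurable]
  rw [heq]
  -- main bound on the lintegral
  set f : ℝ → ℝ≥0∞ := fun t => ENNReal.ofReal (e / ((t - l) ^ 2 + e ^ 2)) with hf
  have hmain : (∫⁻ t : ℝ, f t ∂ω) ≤ Bnd := by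
    have hsplit : (∫⁻ t : ℝ, f t ∂ω) =
        (∫⁻ t in closedBall l 1, f t ∂ω) + (∫⁻ t in (closedBall l 1)ᶜ, f t ∂ω) :=
      (lintegral_add_compl f measurableSet_closedBall).symm
    rw [hsplit]
    have hfar : (∫⁻ t in (closedBall l 1)ᶜ, f t ∂ω)
        ≤ ENNReal.ofReal C₁ * (∫⁻ t : ℝ, ENNReal.ofReal ((1 + t ^ 2)⁻¹) ∂ω) := by
      have hptwise : ∀ t ∈ (closedBall l 1)ᶜ,
          f t ≤ ENNReal.ofReal C₁ * ENNReal.ofReal ((1 + t ^ 2)⁻¹) := by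
        intro t ht
        rw [mem_compl_iff, mem_closedBall, Real.dist_eq, not_le] at ht
        rw [← ENNReal.ofReal_mul hC₁pos.le]
        apply ENNReal.ofReal_le_ofReal
        have h1 : (1:ℝ) < |t - l| := ht
        have h2 : 1 + t ^ 2 ≤ C₁ * (t - l) ^ 2 := by
          have ht1 : |t| ≤ (1 + |l|) * |t - l| := by
            have : |t| ≤ |t - l| + |l| := by
              calc |t| = |(t - l) + l| := by ring_nf
              _ ≤ |t - l| + |l| := abs_add_le _ _
            nlinarith [abs_nonneg l, abs_nonneg (t - l)]
          have ht2 : t ^ 2 ≤ (1 + |l|) ^ 2 * (t - l) ^ 2 := by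
            have := sq_abs t
            nlinarith [abs_nonneg t, abs_nonneg (t-l), sq_abs (t-l)]
          nlinarith [sq_abs (t - l)]
        rw [div_le_iff₀ (by positivity)]
        have h3 : e * (1 + t ^ 2) ≤ C₁ * (t - l) ^ 2 := by nlinarith
        have h4 : C₁ * (t - l) ^ 2 ≤ C₁ * ((t - l) ^ 2 + e ^ 2) := by nlinarith
        calc e ≤ e * (1 + t ^ 2) * (1 + t ^ 2)⁻¹ := by
              rw [mul_inv_cancel_right₀ (by positivity : (1:ℝ) + t ^ 2 ≠ 0)]
        _ ≤ C₁ * ((t - l) ^ 2 + e ^ 2) * (1 + t ^ 2)⁻¹ := by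
              apply mul_le_mul_of_nonneg_right (h3.trans h4) (by positivity)
        _ = C₁ * (1 + t ^ 2)⁻¹ * ((t - l) ^ 2 + e ^ 2) := by ring
      calc (∫⁻ t in (closedBall l 1)ᶜ, f t ∂ω)
          ≤ ∫⁻ t in (closedBall l 1)ᶜ, ENNReal.ofReal C₁ * ENNReal.ofReal ((1 + t ^ 2)⁻¹) ∂ω :=
            setLIntegral_mono' measurableSet_closedBall.compl hptwise
      _ ≤ ∫⁻ t : ℝ, ENNReal.ofReal C₁ * ENNReal.ofReal ((1 + t ^ 2)⁻¹) ∂ω :=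
            setLIntegral_le_lintegral _ _
      _ = ENNReal.ofReal C₁ * ∫⁻ t : ℝ, ENNReal.ofReal ((1 + t ^ 2)⁻¹) ∂ω :=
            lintegral_const_mul _ hw_meas
    have hnear : (∫⁻ t in closedBall l 1, f t ∂ω) ≤ ENNReal.ofReal (5 * C) := by
      set A : ℕ → Set ℝ := fun k =>
        (closedBall l (2 ^ (k + 1) * e) \ closedBall l (2 ^ k * e)) ∩ closedBall l 1 with hA
      have hcover : closedBall l 1 ⊆ closedBall l e ∪ ⋃ k, A k := by
        intro t ht
        rcases le_or_gt (dist t l) e with h | h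
        · exact Or.inl h
        · right
          have habs : dist t l = |t - l| := Real.dist_eq t l
          have hex : ∃ n : ℕ, |t - l| ≤ 2 ^ n * e := by
            obtain ⟨n, hn⟩ := pow_unbounded_of_one_lt (|t - l| / e) one_lt_two
            exact ⟨n, by rw [div_lt_iff₀ he] at hn; linarith⟩
          set n₀ := Nat.find hex with hn₀
          have hn₀ne : n₀ ≠ 0 := by
            intro h0
            have := Nat.find_spec hex
            rw [← hn₀, h0] at this
            simp only [pow_zero, one_mul] at this
            rw [habs] at h
            linarith
          refine mem_iUnion.mpr ⟨n₀ - 1, ?_, ht⟩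
          constructor
          · rw [mem_closedBall, habs]
            have := Nat.find_spec hex
            rwa [← hn₀, ← Nat.succ_pred_eq_of_pos (Nat.pos_of_ne_zero hn₀ne)] at this
          · rw [mem_closedBall, habs, not_le]
            have := Nat.find_min hex (Nat.pred_lt hn₀ne)
            rw [not_le] at this
            exact this
      have hstep : (∫⁻ t in closedBall l 1, f t ∂ω)
          ≤ (∫⁻ t in closedBall l e, f t ∂ω) + ∑' k, (∫⁻ t in A k, f t ∂ω) := by
        calc (∫⁻ t in closedBall l 1, f t ∂ω)
            ≤ ∫⁻ t in closedBall l e ∪ ⋃ k, A k, f t ∂ω := lintegral_mono_set hcover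
        _ ≤ (∫⁻ t in closedBall l e, f t ∂ω) + ∫⁻ t in ⋃ k, A k, f t ∂ω :=
            lintegral_union_le _ _ _
        _ ≤ (∫⁻ t in closedBall l e, f t ∂ω) + ∑' k, (∫⁻ t in A k, f t ∂ω) := by
            exact add_le_add_right (lintegral_iUnion_le _ _) _
      have hcb : (∫⁻ t in closedBall l e, f t ∂ω) ≤ ENNReal.ofReal C := by
        calc (∫⁻ t in closedBall l e, f t ∂ω)
            ≤ ∫⁻ _ in closedBall l e, ENNReal.ofReal (1 / e) ∂ω := by
              apply setLIntegral_mono' measurableSet_closedBall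
              intro t _
              apply ENNReal.ofReal_le_ofReal
              rw [div_le_div_iff₀ (by positivity) he]
              nlinarith
        _ = ENNReal.ofReal (1 / e) * ω (closedBall l e) := by
              rw [setLIntegral_const]
        _ ≤ ENNReal.ofReal (1 / e) * ENNReal.ofReal (C * e) :=
              mul_le_mul_right (hgood e he he1) _
        _ = ENNReal.ofReal C := by
              rw [← ENNReal.ofReal_mul (by positivity)]
              congr 1
              field_simp
      have hAk : ∀ k : ℕ, (∫⁻ t in A k, f t ∂ω)
          ≤ ENNReal.ofReal (2 * C) * (ENNReal.ofReal 2⁻¹) ^ k := by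
        intro k
        rcases le_or_gt 1 ((2:ℝ) ^ k * e) with hbig | hsmall
        · have hempty : A k = ∅ := by
            rw [hA]
            ext t
            simp only [mem_inter_iff, mem_diff, mem_closedBall, mem_empty_iff_false,
              iff_false, not_and, and_imp]
            intro _ ht2 ht3
            exact ht2 (ht3.trans hbig)
          rw [hempty]
          simp
        · have hsub : A k ⊆ closedBall l (min (2 ^ (k + 1) * e) 1) := by
            intro t ht
            rw [mem_closedBall, le_min_iff]
            exact ⟨ht.1.1, ht.2⟩
          have hmeas : ω (A k) ≤ ENNReal.ofReal (C * (2 ^ (k + 1) * e)) := by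
            calc ω (A k) ≤ ω (closedBall l (min (2 ^ (k + 1) * e) 1)) := measure_mono hsub
            _ ≤ ENNReal.ofReal (C * min (2 ^ (k + 1) * e) 1) :=
                hgood _ (lt_min (by positivity) one_pos) (min_le_right _ _)
            _ ≤ ENNReal.ofReal (C * (2 ^ (k + 1) * e)) := by
                apply ENNReal.ofReal_le_ofReal
                have : min ((2:ℝ) ^ (k + 1) * e) 1 ≤ 2 ^ (k + 1) * e := min_le_left _ _
                nlinarith
          have hptk : ∀ t ∈ A k, f t ≤ ENNReal.ofReal (e / (2 ^ k * e) ^ 2) := by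
            intro t ht
            apply ENNReal.ofReal_le_ofReal
            have ht1 : 2 ^ k * e < |t - l| := by
              have := ht.1.2
              rw [mem_closedBall, Real.dist_eq, not_le] at this
              exact this
            apply div_le_div_of_nonneg_left he.le (by positivity)
            have h0 : (0:ℝ) < 2 ^ k * e := by positivity
            nlinarith [sq_abs (t - l), sq_nonneg e]
          calc (∫⁻ t in A k, f t ∂ω)
              ≤ ∫⁻ _ in A k, ENNReal.ofReal (e / (2 ^ k * e) ^ 2) ∂ω :=
                setLIntegral_mono'
                  ((measurableSet_closedBall.diff measurableSet_closedBall).inter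
                    measurableSet_closedBall) hptk
          _ ≤ ENNReal.ofReal (e / (2 ^ k * e) ^ 2) * ENNReal.ofReal (C * (2 ^ (k + 1) * e)) := by
                rw [setLIntegral_const]
                exact mul_le_mul_right hmeas _
          _ = ENNReal.ofReal ((e / (2 ^ k * e) ^ 2) * (C * (2 ^ (k + 1) * e))) := by
                rw [← ENNReal.ofReal_mul (by positivity)]
          _ = ENNReal.ofReal ((2 * C) * (2⁻¹ : ℝ) ^ k) := by
                congr 1
                have h2k : ((2:ℝ) ^ k) ≠ 0 := by positivity
                rw [inv_pow]
                field_simp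
                ring
          _ = ENNReal.ofReal (2 * C) * (ENNReal.ofReal 2⁻¹) ^ k := by
                rw [ENNReal.ofReal_mul (by positivity), ENNReal.ofReal_pow (by norm_num)]
      have hr2 : ENNReal.ofReal 2⁻¹ = (2 : ℝ≥0∞)⁻¹ := by
        rw [ENNReal.ofReal_inv_of_pos two_pos, ENNReal.ofReal_ofNat]
      have hsum : ∑' k, (∫⁻ t in A k, f t ∂ω) ≤ ENNReal.ofReal (4 * C) := by
        calc ∑' k, (∫⁻ t in A k, f t ∂ω)
            ≤ ∑' k, ENNReal.ofReal (2 * C) * (ENNReal.ofReal 2⁻¹) ^ k :=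
              ENNReal.tsum_le_tsum hAk
        _ = ENNReal.ofReal (2 * C) * ∑' k, (ENNReal.ofReal 2⁻¹) ^ k := ENNReal.tsum_mul_left
        _ = ENNReal.ofReal (2 * C) * 2 := by
              rw [hr2, ENNReal.tsum_geometric, ENNReal.one_sub_inv_two, inv_inv]
        _ = ENNReal.ofReal (4 * C) := by
              rw [mul_two, ← ENNReal.ofReal_add (by positivity) (by positivity)]
              congr 1; ring
      calc (∫⁻ t in closedBall l 1, f t ∂ω)
          ≤ (∫⁻ t in closedBall l e, f t ∂ω) + ∑' k, (∫⁻ t in A k, f t ∂ω) := hstep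
      _ ≤ ENNReal.ofReal C + ENNReal.ofReal (4 * C) := add_le_add hcb hsum
      _ = ENNReal.ofReal (5 * C) := by
          rw [← ENNReal.ofReal_add (by positivity) (by positivity)]
          congr 1; ring
    calc (∫⁻ t in closedBall l 1, f t ∂ω) + (∫⁻ t in (closedBall l 1)ᶜ, f t ∂ω)
        ≤ ENNReal.ofReal (5 * C) + ENNReal.ofReal C₁ *
            (∫⁻ t : ℝ, ENNReal.ofReal ((1 + t ^ 2)⁻¹) ∂ω) := add_le_add hnear hfar
    _ = Bnd := rfl
  exact ENNReal.toReal_mono hBndne hmain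

lemma aux_part2 (m : ℂ → ℂ) (c d : ℝ) (ω : Measure ℝ) (hd : 0 ≤ d)
    (hω : (∫⁻ l : ℝ, ENNReal.ofReal ((1 + l ^ 2)⁻¹) ∂ω) < ⊤)
    (hrep : ∀ z : ℂ, 0 < z.im →
      m z = (c : ℂ) + (d : ℂ) * z +
        ∫ l : ℝ, (((l : ℂ) - z)⁻¹ - (l : ℂ) * (1 + (l : ℂ) ^ 2)⁻¹) ∂ω) :
    ∀ᵐ (l : ℝ) ∂(volume : Measure ℝ),
      ¬ Tendsto (fun ε : ℝ => (m ((l : ℂ) + ε * Complex.I)).im) (𝓝[>] 0) atTop := by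
  filter_upwards [aux_good_ae ω hω] with l hgoodl
  obtain ⟨C, hC, hgood⟩ := hgoodl
  obtain ⟨B, hB⟩ := aux_upper ω hω l C hC hgood
  intro hT
  have h1 := hT.eventually_ge_atTop (d + B + 1)
  have h2 : ∀ᶠ ε in 𝓝[>] (0:ℝ), ε ∈ Ioc (0:ℝ) 1 :=
    Ioc_mem_nhdsGT_of_mem ⟨le_rfl, one_pos⟩
  obtain ⟨ε, hε1, hε2⟩ := (h1.and h2).exists
  rw [aux_im_formula m c d ω hω hrep l ε hε2.1] at hε1
  have h3 := hB ε hε2.1 hε2.2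
  have h4 : d * ε ≤ d := by nlinarith [hε2.1.le, hε2.2]
  linarith

/-- For a Herglotz function `m` with Nevanlinna representation measure `ω` decomposed as
`ω = ω_ac + ω_s` (`ω_ac ≪ Lebesgue`, `ω_s ⟂ Lebesgue`), the set
`S = {λ : Im m(λ+iε) → +∞ as ε↓0}` is a minimal support of `ω_s` relative to Lebesgue
measure. -/
theorem minimal_support_singular_part
    (m : ℂ → ℂ)
    (hanal : DifferentiableOn ℂ m {z : ℂ | 0 < z.im})
    (hmap : ∀ z : ℂ, 0 < z.im → 0 < (m z).im)
    (c d : ℝ) (ω : Measure ℝ) (hd : 0 ≤ d)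
    (hω : (∫⁻ l : ℝ, ENNReal.ofReal ((1 + l ^ 2)⁻¹) ∂ω) < ⊤)
    (hrep : ∀ z : ℂ, 0 < z.im →
      m z = (c : ℂ) + (d : ℂ) * z +
        ∫ l : ℝ, (((l : ℂ) - z)⁻¹ - (l : ℂ) * (1 + (l : ℂ) ^ 2)⁻¹) ∂ω)
    (ωac ωs : Measure ℝ) (hdecomp : ω = ωac + ωs)
    (hac : ωac ≪ volume) (hs : Measure.MutuallySingular ωs volume) :
    ωs {l : ℝ |
        Tendsto (fun ε : ℝ => (m ((l : ℂ) + ε * Complex.I)).im) (𝓝[>] 0) atTop}ᶜ = 0 ∧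
      ∀ B : Set ℝ, MeasurableSet B →
        B ⊆ {l : ℝ |
          Tendsto (fun ε : ℝ => (m ((l : ℂ) + ε * Complex.I)).im) (𝓝[>] 0) atTop} →
        ωs B = 0 → volume B = 0 := by
  constructor
  · have h1 := aux_part1 m c d ω hd hω hrep ωac ωs hdecomp hs
    rw [ae_iff] at h1
    rw [Set.compl_setOf]
    exact h1
  · intro B hBmeas hBsub _
    have h2 := aux_part2 m c d ω hd hω hrep
    rw [ae_iff] at h2
    simp only [not_not] at h2
    exact measure_mono_null hBsub h2
end
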